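/- arXiv:1702.08213 — 5 statements merged into one kernel-verified Lean document; each statement's English description precedes it below -/
import Mathlib

section
/- Assume ρ(ε) < 1. For x₀ ∈ E₁ let φ^ε(·, x₀) = (x̂^ε(·, x₀), ŷ^ε(·, x₀)) denote the unique fixed point of I^ε_{x₀} in C_β^−(E₁ × E₂). Then for all x₀, x₀' ∈ E₁, ‖φ^ε(·, x₀) − φ^ε(·, x₀')‖_{C_β^−} ≤ ‖x₀ − x₀'‖ / (1 − ρ(ε)). -/
open MeasureTheory Real Filter

noncomputable section

/-- Weighted sup-norm `sup_{t ≤ 0} e^{-β t} ‖φ t‖` on `(-∞,0]`. -/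
def negNorm {E : Type*} [NormedAddCommGroup E] (β : ℝ) (φ : ℝ → E) : ℝ :=
  ⨆ t : Set.Iic (0 : ℝ), Real.exp (-β * t.1) * ‖φ t.1‖

/-- Membership in the Banach space `C_β^-(E)` of continuous functions on `(-∞,0]`
with finite weighted sup-norm. -/
def MemCneg {E : Type*} [NormedAddCommGroup E] (β : ℝ) (φ : ℝ → E) : Prop :=
  ContinuousOn φ (Set.Iic 0) ∧
    BddAbove (Set.range fun t : Set.Iic (0 : ℝ) => Real.exp (-β * t.1) * ‖φ t.1‖)

/-- Weighted sup-norm `sup_{t ≥ 0} e^{-β t} ‖φ t‖` on `[0,∞)`. -/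
def posNorm {E : Type*} [NormedAddCommGroup E] (β : ℝ) (φ : ℝ → E) : ℝ :=
  ⨆ t : Set.Ici (0 : ℝ), Real.exp (-β * t.1) * ‖φ t.1‖

/-- Membership in the Banach space `C_β^+(E)` of continuous functions on `[0,∞)`
with finite weighted sup-norm. -/
def MemCpos {E : Type*} [NormedAddCommGroup E] (β : ℝ) (φ : ℝ → E) : Prop :=
  ContinuousOn φ (Set.Ici 0) ∧
    BddAbove (Set.range fun t : Set.Ici (0 : ℝ) => Real.exp (-β * t.1) * ‖φ t.1‖)

variable {E₁ E₂ : Type*}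
  [NormedAddCommGroup E₁] [NormedSpace ℝ E₁]
  [NormedAddCommGroup E₂] [NormedSpace ℝ E₂]

/-- Slow component of the Lyapunov–Perron operator `I^ε_{x₀}`. -/
def LPslow (S : E₁ →L[ℝ] E₁) (g1 : ℝ → E₁ → E₂ → E₁) (x0 : E₁)
    (x : ℝ → E₁) (y : ℝ → E₂) (t : ℝ) : E₁ :=
  NormedSpace.exp (t • S) x0 +
    ∫ s in (0:ℝ)..t, NormedSpace.exp ((t - s) • S) (g1 s (x s) (y s))

/-- Fast component of the Lyapunov–Perron operator `I^ε_{x₀}`. -/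
def LPfast (F : E₂ →L[ℝ] E₂) (g2 : ℝ → E₁ → E₂ → E₂) (ε : ℝ)
    (x : ℝ → E₁) (y : ℝ → E₂) (t : ℝ) : E₂ :=
  (1/ε) • ∫ s in Set.Iic t, NormedSpace.exp (((t - s)/ε) • F) (g2 s (x s) (y s))

/- ### Auxiliary lemmas -/

lemma exp_integrableOn_Iic' {a : ℝ} (ha : a < 0) (t : ℝ) :
    IntegrableOn (fun s => Real.exp (a * (t - s))) (Set.Iic t) := by
  have hb : (0:ℝ) < -a := by linarith
  have h1 : IntegrableOn (fun u => Real.exp (a * (t + u))) (Set.Ici (-t)) := by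
    rw [integrableOn_Ici_iff_integrableOn_Ioi]
    have h2 := (exp_neg_integrableOn_Ioi (-t) hb).const_mul (Real.exp (a * t))
    have he : (fun u : ℝ => Real.exp (a * t) * Real.exp (-(-a) * u))
        = fun u => Real.exp (a * (t + u)) := by
      funext u; rw [← Real.exp_add]; ring_nf
    rwa [he] at h2
  have A : MeasurableEmbedding (fun x : ℝ => -x) :=
    (Homeomorph.neg ℝ).isClosedEmbedding.measurableEmbedding
  have hmap : volume.restrict (Set.Ici (-t))
      = Measure.map (fun x : ℝ => -x) (volume.restrict (Set.Iic t)) := by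
    conv_lhs => rw [← Measure.map_neg_eq_self (volume : Measure ℝ)]
    rw [A.restrict_map]
    congr 1
    ext x; simp [neg_le]
  unfold IntegrableOn at h1 ⊢
  rw [hmap] at h1
  have := (A.integrable_map_iff (g := fun u => Real.exp (a * (t + u)))).mp h1
  have he2 : ((fun u => Real.exp (a * (t + u))) ∘ fun x : ℝ => -x)
      = fun s => Real.exp (a * (t - s)) := by
    funext s; show Real.exp (a * (t + - s)) = _; ring_nf
  rwa [he2] at this

lemma exp_integral_Iic' {a : ℝ} (ha : a < 0) (t : ℝ) :
    ∫ s in Set.Iic t, Real.exp (a * (t - s)) = -1/a := by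
  have hb : (0:ℝ) < -a := by linarith
  have key := integral_comp_neg_Iic t (fun u => Real.exp (a * (t + u)))
  have h1 : ∫ s in Set.Iic t, Real.exp (a * (t - s))
      = ∫ s in Set.Iic t, Real.exp (a * (t + -s)) := by
    refine setIntegral_congr_fun measurableSet_Iic (fun s _ => ?_)
    ring_nf
  rw [h1, key]
  have h2 : (fun u : ℝ => Real.exp (a * (t + u)))
      = fun u => Real.exp (a*t) * Real.exp (-(-a * u)) := by
    funext u; rw [← Real.exp_add]; ring_nf
  rw [h2]
  rw [integral_const_mul]
  rw [show (fun u : ℝ => Real.exp (-(-a * u))) = fun u => (fun x => Real.exp (-x)) (-a * u) from rfl]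
  rw [integral_comp_mul_left_Ioi (fun x => Real.exp (-x)) (-t) hb]
  rw [integral_exp_neg_Ioi, smul_eq_mul, show -(-a * -t) = -(a*t) by ring]
  rw [show Real.exp (a*t) * ((-a)⁻¹ * Real.exp (-(a*t)))
      = (-a)⁻¹ * (Real.exp (a*t) * Real.exp (-(a*t))) by ring, ← Real.exp_add,
    add_neg_cancel, Real.exp_zero, mul_one, inv_neg, ← one_div, neg_div]

lemma exp_integral_Ioc_le {c : ℝ} (hc : 0 < c) {t : ℝ} (ht : t ≤ 0) :
    ∫ s in Set.Ioc t 0, Real.exp (c * (t - s)) ≤ 1/c := by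
  have hcont : Continuous (fun s : ℝ => Real.exp (c * (t - s))) := by continuity
  have heq : ∫ s in Set.Ioc t 0, Real.exp (c*(t-s)) = ∫ s in t..0, Real.exp (c*(t-s)) :=
    (intervalIntegral.integral_of_le ht).symm
  have hderiv : ∀ s ∈ Set.uIcc t 0,
      HasDerivAt (fun s => -(Real.exp (c*(t-s))/c)) (Real.exp (c*(t-s))) s := by
    intro s _
    have h := (((hasDerivAt_id s).const_sub t).const_mul c).exp
    have h2 := (h.div_const c).neg
    simp only [id_eq] at h2
    have h3 : HasDerivAt (fun s => -(Real.exp (c*(t-s))/c))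
        (-(Real.exp (c * (t - s)) * (c * -1) / c)) s := h2
    convert h3 using 1
    rw [mul_neg_one, mul_neg, neg_div, neg_neg, mul_div_assoc, div_self hc.ne', mul_one]
  rw [heq, intervalIntegral.integral_eq_sub_of_hasDerivAt hderiv (hcont.intervalIntegrable t 0)]
  have h3 : Real.exp (c * (t - t)) = 1 := by simp
  rw [h3]
  have := Real.exp_pos (c * (t - 0))
  have h4 : -(Real.exp (c * (t - 0)) / c) - -(1 / c) = (1 - Real.exp (c * (t - 0))) / c := by
    ring
  rw [h4, div_le_div_iff₀ hc hc]
  nlinarith [Real.exp_pos (c * (t - 0))]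

lemma aux_meas {E₁ E₂ G : Type*}
    [NormedAddCommGroup E₁] [NormedSpace ℝ E₁] [FiniteDimensional ℝ E₁] [MeasurableSpace E₁] [BorelSpace E₁]
    [NormedAddCommGroup E₂] [NormedSpace ℝ E₂] [FiniteDimensional ℝ E₂] [MeasurableSpace E₂] [BorelSpace E₂]
    [NormedAddCommGroup G] [NormedSpace ℝ G] [FiniteDimensional ℝ G] [MeasurableSpace G] [BorelSpace G]
    (g : ℝ → E₁ → E₂ → G) {K : ℝ} (hK : 0 ≤ K)
    (hgm : ∀ x y, Measurable fun t => g t x y)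
    (hgl : ∀ t x₁ y₁ x₂ y₂, ‖g t x₁ y₁ - g t x₂ y₂‖ ≤ K * (‖x₁ - x₂‖ + ‖y₁ - y₂‖))
    {x : ℝ → E₁} {y : ℝ → E₂}
    (hx : ContinuousOn x (Set.Iic 0)) (hy : ContinuousOn y (Set.Iic 0))
    (T : ℝ → G →L[ℝ] G) (hT : Continuous T)
    {A : Set ℝ} (hAm : MeasurableSet A) (hA : A ⊆ Set.Iic 0) :
    AEStronglyMeasurable (fun s => T s (g s (x s) (y s))) (volume.restrict A) := by
  set x' : ℝ → E₁ := fun s => x (min s 0) with hx'def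
  set y' : ℝ → E₂ := fun s => y (min s 0) with hy'def
  have hmin : Continuous fun s : ℝ => min s 0 := continuous_id.min continuous_const
  have hx' : Continuous x' := hx.comp_continuous hmin (fun s => min_le_right s 0)
  have hy' : Continuous y' := hy.comp_continuous hmin (fun s => min_le_right s 0)
  have hcont : ∀ s : ℝ, Continuous (fun p : E₁ × E₂ => g s p.1 p.2) := by
    intro s
    have : LipschitzWith (Real.toNNReal (2*K)) (fun p : E₁ × E₂ => g s p.1 p.2) := by
      refine LipschitzWith.of_dist_le_mul (fun p q => ?_)
      rw [dist_eq_norm, dist_eq_norm]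
      calc ‖g s p.1 p.2 - g s q.1 q.2‖ ≤ K * (‖p.1 - q.1‖ + ‖p.2 - q.2‖) :=
            hgl s p.1 p.2 q.1 q.2
        _ ≤ K * (‖p - q‖ + ‖p - q‖) := by
            gcongr
            · exact norm_fst_le (p - q)
            · exact norm_snd_le (p - q)
        _ = (2*K) * ‖p - q‖ := by ring
        _ ≤ (Real.toNNReal (2*K) : ℝ) * ‖p - q‖ := by
            gcongr
            exact Real.le_coe_toNNReal _
    exact this.continuous
  have hu : Measurable (Function.uncurry fun (p : E₁ × E₂) (s : ℝ) => g s p.1 p.2) :=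
    measurable_uncurry_of_continuous_of_measurable hcont (fun p => hgm p.1 p.2)
  have hmeas : Measurable fun s => g s (x' s) (y' s) := by
    have := hu.comp (((hx'.prodMk hy').measurable).prodMk measurable_id)
    exact this
  borelize (G →L[ℝ] G)
  have h2 : Measurable fun s => T s (g s (x' s) (y' s)) := by
    have happ : Continuous fun p : (G →L[ℝ] G) × G => p.1 p.2 :=
      isBoundedBilinearMap_apply.continuous
    exact happ.measurable.comp ((hT.measurable).prodMk hmeas)
  refine (h2.stronglyMeasurable.aestronglyMeasurable).congr ?_
  filter_upwards [ae_restrict_mem hAm] with s hs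
  have hs0 : s ≤ 0 := hA hs
  simp only [hx'def, hy'def, min_eq_left hs0]

set_option maxHeartbeats 2000000 in
/-- Lipschitz dependence of the Lyapunov–Perron fixed point on the
initial slow value: `‖φ^ε(·,x₀) - φ^ε(·,x₀')‖ ≤ ‖x₀ - x₀'‖/(1 - ρ(ε))`. -/
theorem lyapunovPerron_fixed_point_lipschitz_in_initial
    {E₁ E₂ : Type*}
    [NormedAddCommGroup E₁] [NormedSpace ℝ E₁] [FiniteDimensional ℝ E₁] [MeasurableSpace E₁] [BorelSpace E₁]
    [NormedAddCommGroup E₂] [NormedSpace ℝ E₂] [FiniteDimensional ℝ E₂] [MeasurableSpace E₂] [BorelSpace E₂]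
    (S : E₁ →L[ℝ] E₁) (F : E₂ →L[ℝ] E₂)
    (γs γf γ K ε : ℝ)
    (hγs : 0 < γs) (hγf : γf < 0) (hγ : 0 < γ) (hK : 0 < K)
    (hgap : K < -(γ + γf)) (hε : 0 < ε)
    (hS : ∀ t ≤ (0:ℝ), ∀ x : E₁, ‖NormedSpace.exp (t • S) x‖ ≤ Real.exp (γs * t) * ‖x‖)
    (hF : ∀ t ≥ (0:ℝ), ∀ y : E₂, ‖NormedSpace.exp (t • F) y‖ ≤ Real.exp (γf * t) * ‖y‖)
    (g1 : ℝ → E₁ → E₂ → E₁) (g2 : ℝ → E₁ → E₂ → E₂)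
    (hg1m : ∀ x y, Measurable fun t => g1 t x y)
    (hg2m : ∀ x y, Measurable fun t => g2 t x y)
    (hg1b : ∀ x y r, ∃ M, ∀ t : ℝ, |t| ≤ r → ‖g1 t x y‖ ≤ M)
    (hg2b : ∀ x y r, ∃ M, ∀ t : ℝ, |t| ≤ r → ‖g2 t x y‖ ≤ M)
    (hg1l : ∀ t x₁ y₁ x₂ y₂, ‖g1 t x₁ y₁ - g1 t x₂ y₂‖ ≤ K * (‖x₁ - x₂‖ + ‖y₁ - y₂‖))
    (hg2l : ∀ t x₁ y₁ x₂ y₂, ‖g2 t x₁ y₁ - g2 t x₂ y₂‖ ≤ K * (‖x₁ - x₂‖ + ‖y₁ - y₂‖))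
    (hg0 : ∃ M, ∀ t ≤ (0:ℝ),
      Real.exp ((γ/ε) * t) * (‖g1 t 0 0‖ + ‖g2 t 0 0‖) ≤ M)
    (hρ : (ε * K / (γ + ε * γs) - K / (γ + γf)) < 1) :
    ∀ (x0 x0' : E₁) (xh : ℝ → E₁) (yh : ℝ → E₂) (xh' : ℝ → E₁) (yh' : ℝ → E₂),
      (MemCneg (-γ/ε) xh ∧ MemCneg (-γ/ε) yh) →
      (∀ t ≤ (0:ℝ), xh t = LPslow S g1 x0 xh yh t ∧ yh t = LPfast F g2 ε xh yh t) →
      (MemCneg (-γ/ε) xh' ∧ MemCneg (-γ/ε) yh') →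
      (∀ t ≤ (0:ℝ), xh' t = LPslow S g1 x0' xh' yh' t ∧ yh' t = LPfast F g2 ε xh' yh' t) →
      negNorm (-γ/ε) (fun t => xh t - xh' t) + negNorm (-γ/ε) (fun t => yh t - yh' t) ≤
        ‖x0 - x0'‖ / (1 - (ε * K / (γ + ε * γs) - K / (γ + γf))) := by
  intro x0 x0' xh yh xh' yh' hmem hfix hmem' hfix'
  obtain ⟨hxc, hyc⟩ := hmem
  obtain ⟨hxc', hyc'⟩ := hmem'
  have hneg : (-(-γ/ε) : ℝ) = γ/ε := by ring
  have hγε : 0 < γ/ε := div_pos hγ hε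
  have hc : 0 < γ/ε + γs := by linarith
  have hgγf : γ + γf < 0 := by linarith
  have ha : (γ + γf)/ε < 0 := div_neg_of_neg_of_pos hgγf hε
  haveI : Nonempty (Set.Iic (0:ℝ)) := ⟨⟨0, Set.self_mem_Iic⟩⟩
  obtain ⟨M, hM⟩ := hg0
  obtain ⟨Bx, hBx⟩ := hxc.2
  obtain ⟨By, hBy⟩ := hyc.2
  obtain ⟨Bx', hBx'⟩ := hxc'.2
  obtain ⟨By', hBy'⟩ := hyc'.2
  -- flip multiplicative exponential bounds
  have hflip : ∀ s v B : ℝ, Real.exp ((γ/ε)*s) * v ≤ B → v ≤ Real.exp (-((γ/ε)*s)) * B := by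
    intro s v B h
    rw [show v = Real.exp (-((γ/ε)*s)) * (Real.exp ((γ/ε)*s) * v) by
      rw [← mul_assoc, ← Real.exp_add]; simp]
    exact mul_le_mul_of_nonneg_left h (Real.exp_pos _).le
  have hxB : ∀ s : ℝ, s ≤ 0 → ‖xh s‖ ≤ Real.exp (-((γ/ε)*s)) * Bx := by
    intro s hs
    refine hflip s _ _ ?_
    have := hBx (Set.mem_range_self (⟨s, hs⟩ : Set.Iic (0:ℝ)))
    rw [hneg] at this; exact this
  have hyB : ∀ s : ℝ, s ≤ 0 → ‖yh s‖ ≤ Real.exp (-((γ/ε)*s)) * By := by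
    intro s hs
    refine hflip s _ _ ?_
    have := hBy (Set.mem_range_self (⟨s, hs⟩ : Set.Iic (0:ℝ)))
    rw [hneg] at this; exact this
  have hxB' : ∀ s : ℝ, s ≤ 0 → ‖xh' s‖ ≤ Real.exp (-((γ/ε)*s)) * Bx' := by
    intro s hs
    refine hflip s _ _ ?_
    have := hBx' (Set.mem_range_self (⟨s, hs⟩ : Set.Iic (0:ℝ)))
    rw [hneg] at this; exact this
  have hyB' : ∀ s : ℝ, s ≤ 0 → ‖yh' s‖ ≤ Real.exp (-((γ/ε)*s)) * By' := by
    intro s hs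
    refine hflip s _ _ ?_
    have := hBy' (Set.mem_range_self (⟨s, hs⟩ : Set.Iic (0:ℝ)))
    rw [hneg] at this; exact this
  have hg1B : ∀ s : ℝ, s ≤ 0 → ‖g1 s 0 0‖ ≤ Real.exp (-((γ/ε)*s)) * M := by
    intro s hs
    refine hflip s _ _ ?_
    have h1 := hM s hs
    have h2 : 0 ≤ Real.exp ((γ/ε)*s) * ‖g2 s 0 0‖ := by positivity
    nlinarith
  have hg2B : ∀ s : ℝ, s ≤ 0 → ‖g2 s 0 0‖ ≤ Real.exp (-((γ/ε)*s)) * M := by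
    intro s hs
    refine hflip s _ _ ?_
    have h1 := hM s hs
    have h2 : 0 ≤ Real.exp ((γ/ε)*s) * ‖g1 s 0 0‖ := by positivity
    nlinarith
  -- full norm bounds on composed nonlinearities
  have hg1full : ∀ (u : ℝ → E₁) (v : ℝ → E₂) (Bu Bv : ℝ),
      (∀ s : ℝ, s ≤ 0 → ‖u s‖ ≤ Real.exp (-((γ/ε)*s)) * Bu) →
      (∀ s : ℝ, s ≤ 0 → ‖v s‖ ≤ Real.exp (-((γ/ε)*s)) * Bv) →
      ∀ s : ℝ, s ≤ 0 → ‖g1 s (u s) (v s)‖ ≤ Real.exp (-((γ/ε)*s)) * (M + K*(Bu+Bv)) := by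
    intro u v Bu Bv hu hv s hs
    have h2 := hg1l s (u s) (v s) 0 0
    simp only [sub_zero] at h2
    have h1 : ‖g1 s (u s) (v s)‖ ≤ ‖g1 s 0 0‖ + K * (‖u s‖ + ‖v s‖) := by
      calc ‖g1 s (u s) (v s)‖ = ‖(g1 s (u s) (v s) - g1 s 0 0) + g1 s 0 0‖ := by
            rw [sub_add_cancel]
        _ ≤ ‖g1 s (u s) (v s) - g1 s 0 0‖ + ‖g1 s 0 0‖ := norm_add_le _ _
        _ ≤ K * (‖u s‖ + ‖v s‖) + ‖g1 s 0 0‖ := by linarith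
        _ = ‖g1 s 0 0‖ + K * (‖u s‖ + ‖v s‖) := by ring
    have h3 : K * (‖u s‖ + ‖v s‖)
        ≤ K * ((Real.exp (-((γ/ε)*s)) * Bu) + (Real.exp (-((γ/ε)*s)) * Bv)) :=
      mul_le_mul_of_nonneg_left (add_le_add (hu s hs) (hv s hs)) hK.le
    have h4 : Real.exp (-((γ/ε)*s)) * M
        + K * ((Real.exp (-((γ/ε)*s)) * Bu) + (Real.exp (-((γ/ε)*s)) * Bv))
        = Real.exp (-((γ/ε)*s)) * (M + K*(Bu+Bv)) := by ring
    have h5 := hg1B s hs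
    linarith
  have hg2full : ∀ (u : ℝ → E₁) (v : ℝ → E₂) (Bu Bv : ℝ),
      (∀ s : ℝ, s ≤ 0 → ‖u s‖ ≤ Real.exp (-((γ/ε)*s)) * Bu) →
      (∀ s : ℝ, s ≤ 0 → ‖v s‖ ≤ Real.exp (-((γ/ε)*s)) * Bv) →
      ∀ s : ℝ, s ≤ 0 → ‖g2 s (u s) (v s)‖ ≤ Real.exp (-((γ/ε)*s)) * (M + K*(Bu+Bv)) := by
    intro u v Bu Bv hu hv s hs
    have h2 := hg2l s (u s) (v s) 0 0
    simp only [sub_zero] at h2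
    have h1 : ‖g2 s (u s) (v s)‖ ≤ ‖g2 s 0 0‖ + K * (‖u s‖ + ‖v s‖) := by
      calc ‖g2 s (u s) (v s)‖ = ‖(g2 s (u s) (v s) - g2 s 0 0) + g2 s 0 0‖ := by
            rw [sub_add_cancel]
        _ ≤ ‖g2 s (u s) (v s) - g2 s 0 0‖ + ‖g2 s 0 0‖ := norm_add_le _ _
        _ ≤ K * (‖u s‖ + ‖v s‖) + ‖g2 s 0 0‖ := by linarith
        _ = ‖g2 s 0 0‖ + K * (‖u s‖ + ‖v s‖) := by ring
    have h3 : K * (‖u s‖ + ‖v s‖)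
        ≤ K * ((Real.exp (-((γ/ε)*s)) * Bu) + (Real.exp (-((γ/ε)*s)) * Bv)) :=
      mul_le_mul_of_nonneg_left (add_le_add (hu s hs) (hv s hs)) hK.le
    have h4 : Real.exp (-((γ/ε)*s)) * M
        + K * ((Real.exp (-((γ/ε)*s)) * Bu) + (Real.exp (-((γ/ε)*s)) * Bv))
        = Real.exp (-((γ/ε)*s)) * (M + K*(Bu+Bv)) := by ring
    have h5 := hg2B s hs
    linarith
  -- measurability of integrands
  have hmeasSlow : ∀ (t : ℝ) (u : ℝ → E₁) (v : ℝ → E₂),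
      ContinuousOn u (Set.Iic 0) → ContinuousOn v (Set.Iic 0) →
      AEStronglyMeasurable (fun s => NormedSpace.exp ((t - s) • S) (g1 s (u s) (v s)))
        (volume.restrict (Set.Ioc t 0)) := by
    intro t u v hu hv
    exact aux_meas g1 hK.le hg1m hg1l hu hv
      (fun s => NormedSpace.exp ((t - s) • S))
      ((continuous_iff_continuousAt.mpr fun x => (NormedSpace.exp_analytic (𝕂 := ℝ) x).continuousAt).comp ((continuous_const.sub continuous_id).smul
        continuous_const))
      measurableSet_Ioc (fun s hs => hs.2)
  have hmeasFast : ∀ (t : ℝ), t ≤ 0 → ∀ (u : ℝ → E₁) (v : ℝ → E₂),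
      ContinuousOn u (Set.Iic 0) → ContinuousOn v (Set.Iic 0) →
      AEStronglyMeasurable (fun s => NormedSpace.exp (((t - s)/ε) • F) (g2 s (u s) (v s)))
        (volume.restrict (Set.Iic t)) := by
    intro t ht u v hu hv
    exact aux_meas g2 hK.le hg2m hg2l hu hv
      (fun s => NormedSpace.exp (((t - s)/ε) • F))
      ((continuous_iff_continuousAt.mpr fun x => (NormedSpace.exp_analytic (𝕂 := ℝ) x).continuousAt).comp (((continuous_const.sub continuous_id).div_const ε).smul
        continuous_const))
      measurableSet_Iic (fun s hs => le_trans hs ht)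
  -- scalar exponential identities
  have hexpid1 : ∀ t s : ℝ, Real.exp (γs*(t-s)) * Real.exp (-((γ/ε)*s))
      = Real.exp (-((γ/ε)*t)) * Real.exp ((γ/ε+γs)*(t-s)) := by
    intro t s; rw [← Real.exp_add, ← Real.exp_add]; congr 1; ring
  have hexpid2 : ∀ t s : ℝ, Real.exp (γf*((t-s)/ε)) * Real.exp (-((γ/ε)*s))
      = Real.exp (-((γ/ε)*t)) * Real.exp (((γ+γf)/ε)*(t-s)) := by
    intro t s; rw [← Real.exp_add, ← Real.exp_add]; congr 1; field_simp; ring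
  -- integrability of the integrands
  have hIntSlow : ∀ (t : ℝ), t ≤ 0 → ∀ (u : ℝ → E₁) (v : ℝ → E₂) (Bu Bv : ℝ),
      ContinuousOn u (Set.Iic 0) → ContinuousOn v (Set.Iic 0) →
      (∀ s : ℝ, s ≤ 0 → ‖u s‖ ≤ Real.exp (-((γ/ε)*s)) * Bu) →
      (∀ s : ℝ, s ≤ 0 → ‖v s‖ ≤ Real.exp (-((γ/ε)*s)) * Bv) →
      IntegrableOn (fun s => NormedSpace.exp ((t - s) • S) (g1 s (u s) (v s)))
        (Set.Ioc t 0) := by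
    intro t ht u v Bu Bv hu hv huB hvB
    refine Integrable.mono' (g := fun s => Real.exp (-((γ/ε)*s)) * (M + K*(Bu+Bv)))
      ?_ (hmeasSlow t u v hu hv) ?_
    · refine Continuous.integrableOn_Ioc ?_
      exact (Real.continuous_exp.comp ((continuous_const.mul continuous_id).neg)).mul
        continuous_const
    · filter_upwards [ae_restrict_mem measurableSet_Ioc] with s hs
      have hs0 : s ≤ 0 := hs.2
      have hts : t - s ≤ 0 := by linarith [hs.1]
      calc ‖NormedSpace.exp ((t - s) • S) (g1 s (u s) (v s))‖
          ≤ Real.exp (γs * (t - s)) * ‖g1 s (u s) (v s)‖ := hS (t-s) hts _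
        _ ≤ 1 * ‖g1 s (u s) (v s)‖ := by
            have h6 : Real.exp (γs*(t-s)) ≤ 1 :=
              Real.exp_le_one_iff.mpr (mul_nonpos_of_nonneg_of_nonpos hγs.le hts)
            exact mul_le_mul_of_nonneg_right h6 (norm_nonneg _)
        _ = ‖g1 s (u s) (v s)‖ := one_mul _
        _ ≤ _ := hg1full u v Bu Bv huB hvB s hs0
  have hIntFast : ∀ (t : ℝ), t ≤ 0 → ∀ (u : ℝ → E₁) (v : ℝ → E₂) (Bu Bv : ℝ),
      ContinuousOn u (Set.Iic 0) → ContinuousOn v (Set.Iic 0) →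
      (∀ s : ℝ, s ≤ 0 → ‖u s‖ ≤ Real.exp (-((γ/ε)*s)) * Bu) →
      (∀ s : ℝ, s ≤ 0 → ‖v s‖ ≤ Real.exp (-((γ/ε)*s)) * Bv) →
      IntegrableOn (fun s => NormedSpace.exp (((t - s)/ε) • F) (g2 s (u s) (v s)))
        (Set.Iic t) := by
    intro t ht u v Bu Bv hu hv huB hvB
    refine Integrable.mono'
      (g := fun s => (M + K*(Bu+Bv)) * (Real.exp (-((γ/ε)*t)) * Real.exp (((γ+γf)/ε)*(t-s))))
      ?_ (hmeasFast t ht u v hu hv) ?_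
    · exact (((exp_integrableOn_Iic' ha t).const_mul _).const_mul _)
    · filter_upwards [ae_restrict_mem measurableSet_Iic] with s hs
      have hs0 : s ≤ 0 := le_trans hs ht
      have hst : s ≤ t := Set.mem_Iic.mp hs
      have hts : 0 ≤ (t - s)/ε := div_nonneg (sub_nonneg.mpr hst) hε.le
      calc ‖NormedSpace.exp (((t - s)/ε) • F) (g2 s (u s) (v s))‖
          ≤ Real.exp (γf * ((t-s)/ε)) * ‖g2 s (u s) (v s)‖ := hF _ hts _
        _ ≤ Real.exp (γf * ((t-s)/ε)) * (Real.exp (-((γ/ε)*s)) * (M + K*(Bu+Bv))) :=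
            mul_le_mul_of_nonneg_left (hg2full u v Bu Bv huB hvB s hs0) (Real.exp_pos _).le
        _ = (Real.exp (γf * ((t-s)/ε)) * Real.exp (-((γ/ε)*s))) * (M + K*(Bu+Bv)) := by ring
        _ = _ := by rw [hexpid2 t s]; ring
  -- weighted norms of the differences
  rw [show (fun t => xh t - xh' t) = (fun u => xh u - xh' u) from rfl,
      show (fun t => yh t - yh' t) = (fun u => yh u - yh' u) from rfl]
  have hN1eq : negNorm (-γ/ε) (fun u => xh u - xh' u)
      = ⨆ t : Set.Iic (0:ℝ), Real.exp ((γ/ε) * t.1) * ‖xh t.1 - xh' t.1‖ := by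
    unfold negNorm; simp only [hneg]
  have hN2eq : negNorm (-γ/ε) (fun u => yh u - yh' u)
      = ⨆ t : Set.Iic (0:ℝ), Real.exp ((γ/ε) * t.1) * ‖yh t.1 - yh' t.1‖ := by
    unfold negNorm; simp only [hneg]
  rw [hN1eq, hN2eq]
  set N1 : ℝ := ⨆ t : Set.Iic (0:ℝ), Real.exp ((γ/ε) * t.1) * ‖xh t.1 - xh' t.1‖ with hN1def
  set N2 : ℝ := ⨆ t : Set.Iic (0:ℝ), Real.exp ((γ/ε) * t.1) * ‖yh t.1 - yh' t.1‖ with hN2def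
  have hbddx : BddAbove
      (Set.range fun t : Set.Iic (0:ℝ) => Real.exp ((γ/ε) * t.1) * ‖xh t.1 - xh' t.1‖) := by
    refine ⟨Bx + Bx', ?_⟩
    rintro z ⟨t, rfl⟩
    have h1 := hBx (Set.mem_range_self t); rw [hneg] at h1
    have h2 := hBx' (Set.mem_range_self t); rw [hneg] at h2
    have h3 : ‖xh t.1 - xh' t.1‖ ≤ ‖xh t.1‖ + ‖xh' t.1‖ := norm_sub_le _ _
    have h4 : Real.exp ((γ/ε)*t.1) * ‖xh t.1 - xh' t.1‖
        ≤ Real.exp ((γ/ε)*t.1) * (‖xh t.1‖ + ‖xh' t.1‖) :=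
      mul_le_mul_of_nonneg_left h3 (Real.exp_pos _).le
    have h5 : Real.exp ((γ/ε)*t.1) * (‖xh t.1‖ + ‖xh' t.1‖)
        = Real.exp ((γ/ε)*t.1)*‖xh t.1‖ + Real.exp ((γ/ε)*t.1)*‖xh' t.1‖ := by ring
    linarith
  have hbddy : BddAbove
      (Set.range fun t : Set.Iic (0:ℝ) => Real.exp ((γ/ε) * t.1) * ‖yh t.1 - yh' t.1‖) := by
    refine ⟨By + By', ?_⟩
    rintro z ⟨t, rfl⟩
    have h1 := hBy (Set.mem_range_self t); rw [hneg] at h1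
    have h2 := hBy' (Set.mem_range_self t); rw [hneg] at h2
    have h3 : ‖yh t.1 - yh' t.1‖ ≤ ‖yh t.1‖ + ‖yh' t.1‖ := norm_sub_le _ _
    have h4 : Real.exp ((γ/ε)*t.1) * ‖yh t.1 - yh' t.1‖
        ≤ Real.exp ((γ/ε)*t.1) * (‖yh t.1‖ + ‖yh' t.1‖) :=
      mul_le_mul_of_nonneg_left h3 (Real.exp_pos _).le
    have h5 : Real.exp ((γ/ε)*t.1) * (‖yh t.1‖ + ‖yh' t.1‖)
        = Real.exp ((γ/ε)*t.1)*‖yh t.1‖ + Real.exp ((γ/ε)*t.1)*‖yh' t.1‖ := by ring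
    linarith
  have hptx : ∀ s : ℝ, s ≤ 0 → ‖xh s - xh' s‖ ≤ Real.exp (-((γ/ε)*s)) * N1 := by
    intro s hs
    exact hflip s _ _ (le_ciSup hbddx (⟨s, hs⟩ : Set.Iic (0:ℝ)))
  have hpty : ∀ s : ℝ, s ≤ 0 → ‖yh s - yh' s‖ ≤ Real.exp (-((γ/ε)*s)) * N2 := by
    intro s hs
    exact hflip s _ _ (le_ciSup hbddy (⟨s, hs⟩ : Set.Iic (0:ℝ)))
  have hN1nonneg : 0 ≤ N1 := by
    have h1 := le_ciSup hbddx (⟨0, Set.self_mem_Iic⟩ : Set.Iic (0:ℝ))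
    have h0 : (0:ℝ) ≤ Real.exp ((γ/ε)*(0:ℝ)) * ‖xh 0 - xh' 0‖ := by positivity
    exact le_trans h0 h1
  have hN2nonneg : 0 ≤ N2 := by
    have h1 := le_ciSup hbddy (⟨0, Set.self_mem_Iic⟩ : Set.Iic (0:ℝ))
    have h0 : (0:ℝ) ≤ Real.exp ((γ/ε)*(0:ℝ)) * ‖yh 0 - yh' 0‖ := by positivity
    exact le_trans h0 h1
  -- main slow estimate
  have hA : ∀ t : ℝ, t ≤ 0 →
      Real.exp ((γ/ε)*t) * ‖xh t - xh' t‖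
        ≤ ‖x0 - x0'‖ + (K/(γ/ε+γs)) * (N1+N2) := by
    intro t ht
    have hif := hIntSlow t ht xh yh Bx By hxc.1 hyc.1 hxB hyB
    have hif' := hIntSlow t ht xh' yh' Bx' By' hxc'.1 hyc'.1 hxB' hyB'
    have hkey : xh t - xh' t = NormedSpace.exp (t • S) (x0 - x0')
        - ∫ s in Set.Ioc t 0, (NormedSpace.exp ((t - s) • S) (g1 s (xh s) (yh s))
            - NormedSpace.exp ((t - s) • S) (g1 s (xh' s) (yh' s))) := by
      rw [(hfix t ht).1, (hfix' t ht).1]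
      unfold LPslow
      rw [integral_sub hif hif', map_sub]
      have h1 : ∫ s in (0:ℝ)..t, NormedSpace.exp ((t - s) • S) (g1 s (xh s) (yh s))
          = - ∫ s in Set.Ioc t 0, NormedSpace.exp ((t - s) • S) (g1 s (xh s) (yh s)) := by
        rw [intervalIntegral.integral_symm, intervalIntegral.integral_of_le ht]
      have h1' : ∫ s in (0:ℝ)..t, NormedSpace.exp ((t - s) • S) (g1 s (xh' s) (yh' s))
          = - ∫ s in Set.Ioc t 0, NormedSpace.exp ((t - s) • S) (g1 s (xh' s) (yh' s)) := by
        rw [intervalIntegral.integral_symm, intervalIntegral.integral_of_le ht]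
      rw [h1, h1']
      abel
    have hbnd : (∫ s in Set.Ioc t 0, ‖NormedSpace.exp ((t - s) • S) (g1 s (xh s) (yh s))
            - NormedSpace.exp ((t - s) • S) (g1 s (xh' s) (yh' s))‖)
        ≤ (K*(N1+N2)) * (Real.exp (-((γ/ε)*t)) * (1/(γ/ε+γs))) := by
      have hmono : (∫ s in Set.Ioc t 0, ‖NormedSpace.exp ((t - s) • S) (g1 s (xh s) (yh s))
              - NormedSpace.exp ((t - s) • S) (g1 s (xh' s) (yh' s))‖)
          ≤ ∫ s in Set.Ioc t 0,
              (K*(N1+N2)) * (Real.exp (-((γ/ε)*t)) * Real.exp ((γ/ε+γs)*(t-s))) := by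
        refine integral_mono_of_nonneg (Filter.Eventually.of_forall fun s => norm_nonneg _)
          ?_ ?_
        · refine Continuous.integrableOn_Ioc ?_
          exact continuous_const.mul (continuous_const.mul
            (Real.continuous_exp.comp (continuous_const.mul
              (continuous_const.sub continuous_id))))
        · filter_upwards [ae_restrict_mem measurableSet_Ioc] with s hs
          have hs0 : s ≤ 0 := hs.2
          have hts : t - s ≤ 0 := by linarith [hs.1]
          rw [← map_sub]
          calc ‖NormedSpace.exp ((t-s)•S) (g1 s (xh s) (yh s) - g1 s (xh' s) (yh' s))‖
              ≤ Real.exp (γs*(t-s)) * ‖g1 s (xh s) (yh s) - g1 s (xh' s) (yh' s)‖ :=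
                hS _ hts _
            _ ≤ Real.exp (γs*(t-s)) * (K * (‖xh s - xh' s‖ + ‖yh s - yh' s‖)) :=
                mul_le_mul_of_nonneg_left (hg1l s _ _ _ _) (Real.exp_pos _).le
            _ ≤ Real.exp (γs*(t-s)) * (K * (Real.exp (-((γ/ε)*s)) * N1
                  + Real.exp (-((γ/ε)*s)) * N2)) := by
                refine mul_le_mul_of_nonneg_left ?_ (Real.exp_pos _).le
                exact mul_le_mul_of_nonneg_left
                  (add_le_add (hptx s hs0) (hpty s hs0)) hK.le
            _ = (K*(N1+N2)) * (Real.exp (γs*(t-s)) * Real.exp (-((γ/ε)*s))) := by ring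
            _ = (K*(N1+N2)) * (Real.exp (-((γ/ε)*t)) * Real.exp ((γ/ε+γs)*(t-s))) := by
                rw [hexpid1]
      have hval : (∫ s in Set.Ioc t 0,
            (K*(N1+N2)) * (Real.exp (-((γ/ε)*t)) * Real.exp ((γ/ε+γs)*(t-s))))
          = (K*(N1+N2)) * (Real.exp (-((γ/ε)*t))
              * ∫ s in Set.Ioc t 0, Real.exp ((γ/ε+γs)*(t-s))) := by
        rw [MeasureTheory.integral_const_mul]
        congr 1
        rw [MeasureTheory.integral_const_mul]
      refine le_trans hmono ?_
      rw [hval]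
      have hint := exp_integral_Ioc_le hc ht
      have hKN : 0 ≤ K*(N1+N2) := mul_nonneg hK.le (by linarith)
      exact mul_le_mul_of_nonneg_left
        (mul_le_mul_of_nonneg_left hint (Real.exp_pos _).le) hKN
    rw [hkey]
    have hterm1 := hS t ht (x0 - x0')
    have hnormle : ‖NormedSpace.exp (t • S) (x0 - x0')
          - ∫ s in Set.Ioc t 0, (NormedSpace.exp ((t - s) • S) (g1 s (xh s) (yh s))
              - NormedSpace.exp ((t - s) • S) (g1 s (xh' s) (yh' s)))‖
        ≤ Real.exp (γs*t)*‖x0-x0'‖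
          + (K*(N1+N2)) * (Real.exp (-((γ/ε)*t)) * (1/(γ/ε+γs))) := by
      refine le_trans (norm_sub_le _ _) ?_
      exact add_le_add hterm1 (le_trans (norm_integral_le_integral_norm _) hbnd)
    calc Real.exp ((γ/ε)*t) * ‖NormedSpace.exp (t • S) (x0 - x0')
          - ∫ s in Set.Ioc t 0, (NormedSpace.exp ((t - s) • S) (g1 s (xh s) (yh s))
              - NormedSpace.exp ((t - s) • S) (g1 s (xh' s) (yh' s)))‖
        ≤ Real.exp ((γ/ε)*t) * (Real.exp (γs*t)*‖x0-x0'‖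
            + (K*(N1+N2)) * (Real.exp (-((γ/ε)*t)) * (1/(γ/ε+γs)))) :=
          mul_le_mul_of_nonneg_left hnormle (Real.exp_pos _).le
      _ = (Real.exp ((γ/ε)*t)*Real.exp (γs*t))*‖x0-x0'‖
          + (Real.exp ((γ/ε)*t)*Real.exp (-((γ/ε)*t)))*((K*(N1+N2))*(1/(γ/ε+γs))) := by
          ring
      _ ≤ 1*‖x0-x0'‖ + 1*((K*(N1+N2))*(1/(γ/ε+γs))) := by
          have h5 : Real.exp ((γ/ε)*t)*Real.exp (γs*t) ≤ 1 := by
            rw [← Real.exp_add]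
            refine Real.exp_le_one_iff.mpr ?_
            nlinarith [mul_nonpos_of_nonneg_of_nonpos hc.le ht]
          have h6 : Real.exp ((γ/ε)*t)*Real.exp (-((γ/ε)*t)) = 1 := by
            rw [← Real.exp_add]; simp
          have hD := norm_nonneg (x0 - x0')
          have hterm : 0 ≤ (K*(N1+N2))*(1/(γ/ε+γs)) := by
            refine mul_nonneg (mul_nonneg hK.le (by linarith)) (by positivity)
          rw [h6]
          exact add_le_add (mul_le_mul_of_nonneg_right h5 hD) (le_refl _)
      _ = ‖x0-x0'‖ + (K/(γ/ε+γs))*(N1+N2) := by ring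
  -- main fast estimate
  have hB : ∀ t : ℝ, t ≤ 0 →
      Real.exp ((γ/ε)*t) * ‖yh t - yh' t‖ ≤ (-(K/(γ+γf))) * (N1+N2) := by
    intro t ht
    have hif := hIntFast t ht xh yh Bx By hxc.1 hyc.1 hxB hyB
    have hif' := hIntFast t ht xh' yh' Bx' By' hxc'.1 hyc'.1 hxB' hyB'
    have hkey : yh t - yh' t = (1/ε) • ∫ s in Set.Iic t,
        (NormedSpace.exp (((t - s)/ε) • F) (g2 s (xh s) (yh s))
          - NormedSpace.exp (((t - s)/ε) • F) (g2 s (xh' s) (yh' s))) := by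
      rw [(hfix t ht).2, (hfix' t ht).2]
      unfold LPfast
      rw [integral_sub hif hif', smul_sub]
    have hbnd : (∫ s in Set.Iic t, ‖NormedSpace.exp (((t - s)/ε) • F) (g2 s (xh s) (yh s))
            - NormedSpace.exp (((t - s)/ε) • F) (g2 s (xh' s) (yh' s))‖)
        ≤ (K*(N1+N2)) * (Real.exp (-((γ/ε)*t)) * (-1/((γ+γf)/ε))) := by
      have hmono : (∫ s in Set.Iic t, ‖NormedSpace.exp (((t - s)/ε) • F) (g2 s (xh s) (yh s))
              - NormedSpace.exp (((t - s)/ε) • F) (g2 s (xh' s) (yh' s))‖)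
          ≤ ∫ s in Set.Iic t,
              (K*(N1+N2)) * (Real.exp (-((γ/ε)*t)) * Real.exp (((γ+γf)/ε)*(t-s))) := by
        refine integral_mono_of_nonneg (Filter.Eventually.of_forall fun s => norm_nonneg _)
          ?_ ?_
        · exact (((exp_integrableOn_Iic' ha t).const_mul _).const_mul _)
        · filter_upwards [ae_restrict_mem measurableSet_Iic] with s hs
          have hst : s ≤ t := Set.mem_Iic.mp hs
          have hs0 : s ≤ 0 := le_trans hst ht
          have hts : 0 ≤ (t - s)/ε := div_nonneg (sub_nonneg.mpr hst) hε.le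
          rw [← map_sub]
          calc ‖NormedSpace.exp (((t-s)/ε)•F)
                (g2 s (xh s) (yh s) - g2 s (xh' s) (yh' s))‖
              ≤ Real.exp (γf*((t-s)/ε)) * ‖g2 s (xh s) (yh s) - g2 s (xh' s) (yh' s)‖ :=
                hF _ hts _
            _ ≤ Real.exp (γf*((t-s)/ε)) * (K * (‖xh s - xh' s‖ + ‖yh s - yh' s‖)) :=
                mul_le_mul_of_nonneg_left (hg2l s _ _ _ _) (Real.exp_pos _).le
            _ ≤ Real.exp (γf*((t-s)/ε)) * (K * (Real.exp (-((γ/ε)*s)) * N1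
                  + Real.exp (-((γ/ε)*s)) * N2)) := by
                refine mul_le_mul_of_nonneg_left ?_ (Real.exp_pos _).le
                exact mul_le_mul_of_nonneg_left
                  (add_le_add (hptx s hs0) (hpty s hs0)) hK.le
            _ = (K*(N1+N2)) * (Real.exp (γf*((t-s)/ε)) * Real.exp (-((γ/ε)*s))) := by ring
            _ = (K*(N1+N2)) * (Real.exp (-((γ/ε)*t)) * Real.exp (((γ+γf)/ε)*(t-s))) := by
                rw [hexpid2]
      have hval : (∫ s in Set.Iic t,
            (K*(N1+N2)) * (Real.exp (-((γ/ε)*t)) * Real.exp (((γ+γf)/ε)*(t-s))))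
          = (K*(N1+N2)) * (Real.exp (-((γ/ε)*t))
              * ∫ s in Set.Iic t, Real.exp (((γ+γf)/ε)*(t-s))) := by
        rw [MeasureTheory.integral_const_mul]
        congr 1
        rw [MeasureTheory.integral_const_mul]
      refine le_trans hmono ?_
      rw [hval, exp_integral_Iic' ha t]
    rw [hkey, norm_smul]
    have habs : ‖(1/ε : ℝ)‖ = 1/ε := by
      rw [Real.norm_eq_abs, abs_of_pos (by positivity)]
    rw [habs]
    calc Real.exp ((γ/ε)*t) * (1/ε * ‖∫ s in Set.Iic t,
          (NormedSpace.exp (((t - s)/ε) • F) (g2 s (xh s) (yh s))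
            - NormedSpace.exp (((t - s)/ε) • F) (g2 s (xh' s) (yh' s)))‖)
        ≤ Real.exp ((γ/ε)*t) * (1/ε * ((K*(N1+N2))
            * (Real.exp (-((γ/ε)*t)) * (-1/((γ+γf)/ε))))) := by
          refine mul_le_mul_of_nonneg_left (mul_le_mul_of_nonneg_left
            (le_trans (norm_integral_le_integral_norm _) hbnd) (by positivity))
            (Real.exp_pos _).le
      _ = (Real.exp ((γ/ε)*t) * Real.exp (-((γ/ε)*t)))
            * (1/ε * (K*(N1+N2)) * (-1/((γ+γf)/ε))) := by ring
      _ = (-(K/(γ+γf))) * (N1+N2) := by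
          rw [← Real.exp_add, show (γ/ε)*t + -((γ/ε)*t) = 0 by ring, Real.exp_zero,
            one_mul]
          have hne : γ + γf ≠ 0 := ne_of_lt hgγf
          field_simp
  -- conclude
  have hN1le : N1 ≤ ‖x0 - x0'‖ + (K/(γ/ε+γs))*(N1+N2) :=
    ciSup_le fun t => hA t.1 t.2
  have hN2le : N2 ≤ (-(K/(γ+γf)))*(N1+N2) :=
    ciSup_le fun t => hB t.1 t.2
  have hden : 0 < γ + ε*γs := by positivity
  have hρeq : (K/(γ/ε+γs)) + (-(K/(γ+γf))) = ε*K/(γ+ε*γs) - K/(γ+γf) := by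
    have h1 : K/(γ/ε+γs) = ε*K/(γ+ε*γs) := by
      rw [div_eq_div_iff (by linarith) (by linarith)]
      field_simp
    linarith
  have h7 : (K/(γ/ε+γs))*(N1+N2) + (-(K/(γ+γf)))*(N1+N2)
      = (ε*K/(γ+ε*γs) - K/(γ+γf))*(N1+N2) := by
    rw [← hρeq]; ring
  have hNsum : N1 + N2 ≤ ‖x0-x0'‖ + (ε*K/(γ+ε*γs) - K/(γ+γf))*(N1+N2) := by
    linarith
  have h1ρ : 0 < 1 - (ε*K/(γ+ε*γs) - K/(γ+γf)) := by linarith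
  rw [le_div_iff₀ h1ρ]
  calc (N1+N2)*(1 - (ε*K/(γ+ε*γs) - K/(γ+γf)))
      = (N1+N2) - (ε*K/(γ+ε*γs) - K/(γ+γf))*(N1+N2) := by ring
    _ ≤ ‖x0-x0'‖ := by linarith
end
end

section
/- Assume ρ(ε) < 1. For x₀ ∈ E₁ let (x̂^ε(·, x₀), ŷ^ε(·, x₀)) be the unique fixed point of I^ε_{x₀} in C_β^−(E₁ × E₂), and define the slow-manifold map ĥ^ε : E₁ → E₂ by ĥ^ε(x₀) := (1/ε)∫_{−∞}^0 exp((−s/ε)F) ĝ₂(s, x̂^ε(s, x₀), ŷ^ε(s, x₀)) ds (equivalently ĥ^ε(x₀) = ŷ^ε(0, x₀)). Then ĥ^ε is Lipschitz continuous with ‖ĥ^ε(x₀) − ĥ^ε(x₀')‖ ≤ (−K/(γ + γ_f)) · (1/(1 − ρ(ε))) · ‖x₀ − x₀'‖ for all x₀, x₀' ∈ E₁. -/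
open MeasureTheory Real Filter Topology

noncomputable section

lemma my_integral_exp_mul {c : ℝ} (hc : c ≠ 0) (a b : ℝ) :
    ∫ s in a..b, Real.exp (c * s) = (Real.exp (c * b) - Real.exp (c * a)) / c := by
  rw [intervalIntegral.integral_comp_mul_left (fun u => Real.exp u) hc, integral_exp,
    smul_eq_mul]
  ring

lemma my_integrableOn_exp_mul_Iic {c : ℝ} (hc : 0 < c) (t : ℝ) :
    IntegrableOn (fun s => Real.exp (c * s)) (Set.Iic t) := by
  refine integrableOn_Iic_of_intervalIntegral_norm_bounded (Real.exp (c * t) / c) t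
    (fun y => ((continuous_exp.comp (continuous_const.mul continuous_id)).integrableOn_Ioc)) tendsto_id ?_
  filter_upwards with y
  simp only [id_eq, Real.norm_eq_abs, Real.abs_exp, my_integral_exp_mul hc.ne' y t]
  have := (Real.exp_pos (c * y)).le
  gcongr
  linarith

lemma my_integral_exp_mul_Iic {c : ℝ} (hc : 0 < c) (t : ℝ) :
    ∫ s in Set.Iic t, Real.exp (c * s) = Real.exp (c * t) / c := by
  refine tendsto_nhds_unique
    (intervalIntegral_tendsto_integral_Iic _ (my_integrableOn_exp_mul_Iic hc t) tendsto_id) ?_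
  have h : ∀ y : ℝ, ∫ s in y..t, Real.exp (c * s) = (Real.exp (c*t) - Real.exp (c*y))/c :=
    fun y => my_integral_exp_mul hc.ne' y t
  simp_rw [h]
  have h2 : Tendsto (fun y : ℝ => Real.exp (c * y)) atBot (𝓝 0) :=
    Real.tendsto_exp_atBot.comp (tendsto_id.const_mul_atBot hc)
  have := ((tendsto_const_nhds (x := Real.exp (c*t))).sub h2).div_const c
  simpa using this

lemma my_comp_aesm {E₁ E₂ G : Type*}
    [NormedAddCommGroup E₁] [NormedSpace ℝ E₁] [FiniteDimensional ℝ E₁] [MeasurableSpace E₁] [BorelSpace E₁]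
    [NormedAddCommGroup E₂] [NormedSpace ℝ E₂] [FiniteDimensional ℝ E₂] [MeasurableSpace E₂] [BorelSpace E₂]
    [NormedAddCommGroup G] [NormedSpace ℝ G] [FiniteDimensional ℝ G] [MeasurableSpace G] [BorelSpace G]
    (K : ℝ) (g : ℝ → E₁ → E₂ → G)
    (hm : ∀ x y, Measurable fun t => g t x y)
    (hl : ∀ t x₁ y₁ x₂ y₂, ‖g t x₁ y₁ - g t x₂ y₂‖ ≤ K * (‖x₁ - x₂‖ + ‖y₁ - y₂‖))
    {x : ℝ → E₁} {y : ℝ → E₂} (hx : ContinuousOn x (Set.Iic 0)) (hy : ContinuousOn y (Set.Iic 0)) :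
    AEStronglyMeasurable (fun s => g s (x s) (y s)) (volume.restrict (Set.Iic (0:ℝ))) := by
  have hcont : ∀ t : ℝ, Continuous fun p : E₁ × E₂ => g t p.1 p.2 := by
    intro t
    have hC : (0:ℝ) ≤ 2 * max K 0 := by positivity
    refine (LipschitzWith.of_dist_le_mul (K := (2 * max K 0).toNNReal)
      (f := fun p : E₁ × E₂ => g t p.1 p.2) ?_).continuous
    intro p q
    rw [Real.coe_toNNReal _ hC]
    simp only [dist_eq_norm]
    have h1 : ‖p.1 - q.1‖ ≤ ‖p - q‖ := norm_fst_le (p - q)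
    have h2 : ‖p.2 - q.2‖ ≤ ‖p - q‖ := norm_snd_le (p - q)
    have := hl t p.1 p.2 q.1 q.2
    have hK : K ≤ max K 0 := le_max_left _ _
    have hn : (0:ℝ) ≤ ‖p - q‖ := norm_nonneg _
    nlinarith [norm_nonneg (p.1 - q.1), norm_nonneg (p.2 - q.2),
      mul_le_mul_of_nonneg_right hK (add_nonneg (norm_nonneg (p.1-q.1)) (norm_nonneg (p.2-q.2)))]
  have hu : Measurable (Function.uncurry fun (p : E₁ × E₂) (t : ℝ) => g t p.1 p.2) :=
    measurable_uncurry_of_continuous_of_measurable (fun t => hcont t) (fun p => hm p.1 p.2)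
  have hxy : AEMeasurable (fun s => ((x s, y s), s)) (volume.restrict (Set.Iic (0:ℝ))) :=
    ((hx.aemeasurable measurableSet_Iic).prodMk (hy.aemeasurable measurableSet_Iic)).prodMk
      aemeasurable_id
  exact (hu.comp_aemeasurable hxy).aestronglyMeasurable

/-- pointwise bound from the weighted sup norm -/
lemma my_pt {E : Type*} [NormedAddCommGroup E] (β : ℝ) (φ : ℝ → E)
    (hb : BddAbove (Set.range fun t : Set.Iic (0 : ℝ) => Real.exp (-β * t.1) * ‖φ t.1‖))
    {s : ℝ} (hs : s ≤ 0) : ‖φ s‖ ≤ Real.exp (β * s) * negNorm β φ := by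
  have h : Real.exp (-β * s) * ‖φ s‖ ≤ negNorm β φ := le_ciSup hb (⟨s, hs⟩ : Set.Iic (0:ℝ))
  have he : Real.exp (β * s) * Real.exp (-β * s) = 1 := by
    rw [← Real.exp_add]; ring_nf; exact Real.exp_zero
  have hp := Real.exp_pos (β * s)
  have he2 : Real.exp (β * s) * (Real.exp (-β * s) * ‖φ s‖) = ‖φ s‖ := by
    rw [← mul_assoc, he, one_mul]
  have := mul_le_mul_of_nonneg_left h hp.le
  linarith

lemma my_negNorm_nonneg {E : Type*} [NormedAddCommGroup E] (β : ℝ) (φ : ℝ → E)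
    (hb : BddAbove (Set.range fun t : Set.Iic (0 : ℝ) => Real.exp (-β * t.1) * ‖φ t.1‖)) :
    0 ≤ negNorm β φ := by
  have h : Real.exp (-β * (0:ℝ)) * ‖φ 0‖ ≤ negNorm β φ :=
    le_ciSup hb (⟨0, Set.self_mem_Iic⟩ : Set.Iic (0:ℝ))
  have : (0:ℝ) ≤ Real.exp (-β * 0) * ‖φ 0‖ := by positivity
  exact this.trans h


variable {E₁ E₂ : Type*}
  [NormedAddCommGroup E₁] [NormedSpace ℝ E₁]
  [NormedAddCommGroup E₂] [NormedSpace ℝ E₂]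

set_option maxHeartbeats 3200000 in
/-- The slow-manifold map `ĥ^ε(x₀) = ŷ^ε(0,x₀)` is Lipschitz with
constant `(-K/(γ+γ_f))·(1/(1-ρ(ε)))`. -/
theorem slowManifold_map_lipschitz
    {E₁ E₂ : Type*}
    [NormedAddCommGroup E₁] [NormedSpace ℝ E₁] [FiniteDimensional ℝ E₁] [MeasurableSpace E₁] [BorelSpace E₁]
    [NormedAddCommGroup E₂] [NormedSpace ℝ E₂] [FiniteDimensional ℝ E₂] [MeasurableSpace E₂] [BorelSpace E₂]
    (S : E₁ →L[ℝ] E₁) (F : E₂ →L[ℝ] E₂)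
    (γs γf γ K ε : ℝ)
    (hγs : 0 < γs) (hγf : γf < 0) (hγ : 0 < γ) (hK : 0 < K)
    (hgap : K < -(γ + γf)) (hε : 0 < ε)
    (hS : ∀ t ≤ (0:ℝ), ∀ x : E₁, ‖NormedSpace.exp (t • S) x‖ ≤ Real.exp (γs * t) * ‖x‖)
    (hF : ∀ t ≥ (0:ℝ), ∀ y : E₂, ‖NormedSpace.exp (t • F) y‖ ≤ Real.exp (γf * t) * ‖y‖)
    (g1 : ℝ → E₁ → E₂ → E₁) (g2 : ℝ → E₁ → E₂ → E₂)
    (hg1m : ∀ x y, Measurable fun t => g1 t x y)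
    (hg2m : ∀ x y, Measurable fun t => g2 t x y)
    (hg1b : ∀ x y r, ∃ M, ∀ t : ℝ, |t| ≤ r → ‖g1 t x y‖ ≤ M)
    (hg2b : ∀ x y r, ∃ M, ∀ t : ℝ, |t| ≤ r → ‖g2 t x y‖ ≤ M)
    (hg1l : ∀ t x₁ y₁ x₂ y₂, ‖g1 t x₁ y₁ - g1 t x₂ y₂‖ ≤ K * (‖x₁ - x₂‖ + ‖y₁ - y₂‖))
    (hg2l : ∀ t x₁ y₁ x₂ y₂, ‖g2 t x₁ y₁ - g2 t x₂ y₂‖ ≤ K * (‖x₁ - x₂‖ + ‖y₁ - y₂‖))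
    (hg0 : ∃ M, ∀ t ≤ (0:ℝ),
      Real.exp ((γ/ε) * t) * (‖g1 t 0 0‖ + ‖g2 t 0 0‖) ≤ M)
    (hρ : (ε * K / (γ + ε * γs) - K / (γ + γf)) < 1) :
    ∀ (x0 x0' : E₁) (xh : ℝ → E₁) (yh : ℝ → E₂) (xh' : ℝ → E₁) (yh' : ℝ → E₂),
      (MemCneg (-γ/ε) xh ∧ MemCneg (-γ/ε) yh) →
      (∀ t ≤ (0:ℝ), xh t = LPslow S g1 x0 xh yh t ∧ yh t = LPfast F g2 ε xh yh t) →
      (MemCneg (-γ/ε) xh' ∧ MemCneg (-γ/ε) yh') →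
      (∀ t ≤ (0:ℝ), xh' t = LPslow S g1 x0' xh' yh' t ∧ yh' t = LPfast F g2 ε xh' yh' t) →
      ‖yh 0 - yh' 0‖ ≤ (-K / (γ + γf)) * (1 / (1 - (ε * K / (γ + ε * γs) - K / (γ + γf)))) * ‖x0 - x0'‖ := by

  intro x0 x0' xh yh xh' yh' hmem hfix hmem' hfix'
  obtain ⟨⟨hxc, hxb⟩, hyc, hyb⟩ := hmem
  obtain ⟨⟨hxc', hxb'⟩, hyc', hyb'⟩ := hmem'
  haveI : Nonempty (Set.Iic (0:ℝ)) := ⟨⟨0, Set.self_mem_Iic⟩⟩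
  set β : ℝ := -γ/ε with hβ
  have hεne : ε ≠ 0 := hε.ne'
  have hβneg : β < 0 := by
    rw [hβ]; exact div_neg_of_neg_of_pos (by linarith) hε
  have hgfneg : γ + γf < 0 := by linarith
  have hγεγs : 0 < γ + ε * γs := by positivity
  have hc₁ : β - γs < 0 := by linarith
  have hd : 0 < β - γf/ε := by
    have h : β - γf/ε = (-γ-γf)/ε := by rw [hβ]; ring
    rw [h]; exact div_pos (by linarith) hε
  set d : ℝ := β - γf/ε with hddef
  -- bddAbove for differences
  have hbx : BddAbove (Set.range fun t : Set.Iic (0:ℝ) =>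
      Real.exp (-β*t.1) * ‖xh t.1 - xh' t.1‖) := by
    refine ⟨negNorm β xh + negNorm β xh', ?_⟩
    rintro v ⟨t, rfl⟩
    dsimp only
    have h1 : Real.exp (-β*t.1) * ‖xh t.1‖ ≤ negNorm β xh := le_ciSup hxb t
    have h2 : Real.exp (-β*t.1) * ‖xh' t.1‖ ≤ negNorm β xh' := le_ciSup hxb' t
    have h3 : ‖xh t.1 - xh' t.1‖ ≤ ‖xh t.1‖ + ‖xh' t.1‖ := norm_sub_le _ _
    have hp := (Real.exp_pos (-β*t.1)).le
    nlinarith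
  have hby : BddAbove (Set.range fun t : Set.Iic (0:ℝ) =>
      Real.exp (-β*t.1) * ‖yh t.1 - yh' t.1‖) := by
    refine ⟨negNorm β yh + negNorm β yh', ?_⟩
    rintro v ⟨t, rfl⟩
    dsimp only
    have h1 : Real.exp (-β*t.1) * ‖yh t.1‖ ≤ negNorm β yh := le_ciSup hyb t
    have h2 : Real.exp (-β*t.1) * ‖yh' t.1‖ ≤ negNorm β yh' := le_ciSup hyb' t
    have h3 : ‖yh t.1 - yh' t.1‖ ≤ ‖yh t.1‖ + ‖yh' t.1‖ := norm_sub_le _ _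
    have hp := (Real.exp_pos (-β*t.1)).le
    nlinarith
  set Nx : ℝ := negNorm β (fun t => xh t - xh' t) with hNxdef
  set Ny : ℝ := negNorm β (fun t => yh t - yh' t) with hNydef
  set D : ℝ := Nx + Ny with hDdef
  have hNx0 : 0 ≤ Nx := my_negNorm_nonneg β _ hbx
  have hNy0 : 0 ≤ Ny := my_negNorm_nonneg β _ hby
  have hD0 : 0 ≤ D := by rw [hDdef]; linarith
  have hΔx : ∀ s ≤ (0:ℝ), ‖xh s - xh' s‖ ≤ Real.exp (β*s) * Nx :=
    fun s hs => my_pt β (fun t => xh t - xh' t) hbx hs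
  have hΔy : ∀ s ≤ (0:ℝ), ‖yh s - yh' s‖ ≤ Real.exp (β*s) * Ny :=
    fun s hs => my_pt β (fun t => yh t - yh' t) hby hs
  have hg1d : ∀ s ≤ (0:ℝ), ‖g1 s (xh s) (yh s) - g1 s (xh' s) (yh' s)‖ ≤
      K * (Real.exp (β*s) * D) := by
    intro s hs
    have h1 := hΔx s hs; have h2 := hΔy s hs
    calc ‖g1 s (xh s) (yh s) - g1 s (xh' s) (yh' s)‖
        ≤ K * (‖xh s - xh' s‖ + ‖yh s - yh' s‖) := hg1l s (xh s) (yh s) (xh' s) (yh' s)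
      _ ≤ K * ((Real.exp (β*s) * Nx) + (Real.exp (β*s) * Ny)) :=
          mul_le_mul_of_nonneg_left (add_le_add h1 h2) hK.le
      _ = K * (Real.exp (β*s) * D) := by rw [hDdef]; ring
  have hg2d : ∀ s ≤ (0:ℝ), ‖g2 s (xh s) (yh s) - g2 s (xh' s) (yh' s)‖ ≤
      K * (Real.exp (β*s) * D) := by
    intro s hs
    have h1 := hΔx s hs; have h2 := hΔy s hs
    calc ‖g2 s (xh s) (yh s) - g2 s (xh' s) (yh' s)‖
        ≤ K * (‖xh s - xh' s‖ + ‖yh s - yh' s‖) := hg2l s (xh s) (yh s) (xh' s) (yh' s)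
      _ ≤ K * ((Real.exp (β*s) * Nx) + (Real.exp (β*s) * Ny)) :=
          mul_le_mul_of_nonneg_left (add_le_add h1 h2) hK.le
      _ = K * (Real.exp (β*s) * D) := by rw [hDdef]; ring
  -- measurability of the composed nonlinearities
  have hm1 : AEStronglyMeasurable (fun s => g1 s (xh s) (yh s))
      (volume.restrict (Set.Iic (0:ℝ))) := my_comp_aesm K g1 hg1m hg1l hxc hyc
  have hm1' : AEStronglyMeasurable (fun s => g1 s (xh' s) (yh' s))
      (volume.restrict (Set.Iic (0:ℝ))) := my_comp_aesm K g1 hg1m hg1l hxc' hyc'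
  have hm2 : AEStronglyMeasurable (fun s => g2 s (xh s) (yh s))
      (volume.restrict (Set.Iic (0:ℝ))) := my_comp_aesm K g2 hg2m hg2l hxc hyc
  have hm2' : AEStronglyMeasurable (fun s => g2 s (xh' s) (yh' s))
      (volume.restrict (Set.Iic (0:ℝ))) := my_comp_aesm K g2 hg2m hg2l hxc' hyc'
  -- pointwise bounds on original functions
  have hxhpt : ∀ s ≤ (0:ℝ), ‖xh s‖ ≤ Real.exp (β*s) * negNorm β xh :=
    fun s hs => my_pt β xh hxb hs
  have hyhpt : ∀ s ≤ (0:ℝ), ‖yh s‖ ≤ Real.exp (β*s) * negNorm β yh :=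
    fun s hs => my_pt β yh hyb hs
  have hxhpt' : ∀ s ≤ (0:ℝ), ‖xh' s‖ ≤ Real.exp (β*s) * negNorm β xh' :=
    fun s hs => my_pt β xh' hxb' hs
  have hyhpt' : ∀ s ≤ (0:ℝ), ‖yh' s‖ ≤ Real.exp (β*s) * negNorm β yh' :=
    fun s hs => my_pt β yh' hyb' hs
  have hNxh0 : 0 ≤ negNorm β xh := my_negNorm_nonneg β _ hxb
  have hNyh0 : 0 ≤ negNorm β yh := my_negNorm_nonneg β _ hyb
  have hNxh0' : 0 ≤ negNorm β xh' := my_negNorm_nonneg β _ hxb'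
  have hNyh0' : 0 ≤ negNorm β yh' := my_negNorm_nonneg β _ hyb'
  -- SLOW bound
  have slowBound : ∀ t ≤ (0:ℝ), Real.exp (-β*t) * ‖xh t - xh' t‖ ≤
      ‖x0 - x0'‖ + (ε*K/(γ+ε*γs)) * D := by
    intro t ht
    have hsub : Set.uIoc (0:ℝ) t ⊆ Set.Iic 0 := by
      rw [Set.uIoc_of_ge ht]; exact fun x hx => hx.2
    obtain ⟨M1, hM1⟩ := hg1b 0 0 (-t)
    letI : NormedAlgebra ℚ (E₁ →L[ℝ] E₁) := NormedAlgebra.restrictScalars ℚ ℝ (E₁ →L[ℝ] E₁)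
    have hA : Continuous fun s : ℝ => NormedSpace.exp ((t-s) • S) :=
      NormedSpace.exp_continuous.comp ((continuous_const.sub continuous_id).smul continuous_const)
    -- integrability of both integrands
    have mkInt : ∀ (u : ℝ → E₁) (v : ℝ → E₂),
        AEStronglyMeasurable (fun s => g1 s (u s) (v s)) (volume.restrict (Set.Iic (0:ℝ))) →
        (∀ s ≤ (0:ℝ), ‖u s‖ ≤ Real.exp (β*s) * negNorm β u) →
        (∀ s ≤ (0:ℝ), ‖v s‖ ≤ Real.exp (β*s) * negNorm β v) →
        0 ≤ negNorm β u → 0 ≤ negNorm β v →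
        IntervalIntegrable (fun s => NormedSpace.exp ((t-s) • S) (g1 s (u s) (v s)))
          volume 0 t := by
      intro u v hm hu hv hu0 hv0
      rw [intervalIntegrable_iff]
      have hmes : AEStronglyMeasurable (fun s => NormedSpace.exp ((t-s) • S) (g1 s (u s) (v s)))
          (volume.restrict (Set.uIoc (0:ℝ) t)) :=
        isBoundedBilinearMap_apply.continuous.comp_aestronglyMeasurable
          (hA.aestronglyMeasurable.prodMk (hm.mono_measure (Measure.restrict_mono hsub le_rfl)))
      refine Integrable.mono'
        ((integrableOn_const
          (C := K*(Real.exp (β*t)*(negNorm β u + negNorm β v)) + M1) measure_Ioc_lt_top.ne)) hmes ?_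
      rw [ae_restrict_iff' measurableSet_uIoc]
      refine Eventually.of_forall fun s hs => ?_
      rw [Set.uIoc_of_ge ht] at hs
      have hs0 : s ≤ 0 := hs.2
      have hst : t ≤ s := hs.1.le
      have h1 := hS (t-s) (by linarith) (g1 s (u s) (v s))
      have h2 : Real.exp (γs*(t-s)) ≤ 1 := Real.exp_le_one_iff.mpr (by nlinarith)
      have htri : ‖g1 s (u s) (v s)‖ ≤ ‖g1 s (u s) (v s) - g1 s 0 0‖ + ‖g1 s 0 0‖ := by
        simpa using norm_add_le (g1 s (u s) (v s) - g1 s 0 0) (g1 s 0 0)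
      have h3 := hg1l s (u s) (v s) 0 0
      simp only [sub_zero] at h3
      have h4 := hM1 s (by rw [abs_of_nonpos hs0]; linarith)
      have hexp : Real.exp (β*s) ≤ Real.exp (β*t) :=
        Real.exp_le_exp.mpr (by nlinarith)
      have h5 : ‖u s‖ ≤ Real.exp (β*t) * negNorm β u := by
        refine (hu s hs0).trans ?_
        exact mul_le_mul_of_nonneg_right hexp hu0
      have h6 : ‖v s‖ ≤ Real.exp (β*t) * negNorm β v := by
        refine (hv s hs0).trans ?_
        exact mul_le_mul_of_nonneg_right hexp hv0
      have hg1pos := norm_nonneg (g1 s (u s) (v s))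
      nlinarith [Real.exp_pos (γs*(t-s))]
    have hfi := mkInt xh yh hm1 hxhpt hyhpt hNxh0 hNyh0
    have hfi' := mkInt xh' yh' hm1' hxhpt' hyhpt' hNxh0' hNyh0'
    have heq : xh t - xh' t = NormedSpace.exp (t • S) (x0 - x0') +
        ∫ s in (0:ℝ)..t, (NormedSpace.exp ((t-s) • S) (g1 s (xh s) (yh s)) -
          NormedSpace.exp ((t-s) • S) (g1 s (xh' s) (yh' s))) := by
      rw [(hfix t ht).1, (hfix' t ht).1]
      simp only [LPslow]
      rw [intervalIntegral.integral_sub hfi hfi', map_sub]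
      abel
    have h1 := hS t ht (x0 - x0')
    have hgb : IntervalIntegrable (fun s => K*D*Real.exp (γs*t) * Real.exp ((β-γs)*s))
        volume 0 t := by
      apply Continuous.intervalIntegrable
      exact continuous_const.mul (Real.continuous_exp.comp (continuous_const.mul continuous_id))
    have h2 : ‖∫ s in (0:ℝ)..t, (NormedSpace.exp ((t-s) • S) (g1 s (xh s) (yh s)) -
          NormedSpace.exp ((t-s) • S) (g1 s (xh' s) (yh' s)))‖ ≤
        |∫ s in (0:ℝ)..t, K*D*Real.exp (γs*t) * Real.exp ((β-γs)*s)| := by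
      refine intervalIntegral.norm_integral_le_abs_of_norm_le ?_ hgb
      rw [ae_restrict_iff' measurableSet_uIoc]
      refine Eventually.of_forall fun s hs => ?_
      rw [Set.uIoc_of_ge ht] at hs
      have hs0 : s ≤ 0 := hs.2
      have hst : t ≤ s := hs.1.le
      rw [← map_sub]
      have h3 := hS (t-s) (by linarith) (g1 s (xh s) (yh s) - g1 s (xh' s) (yh' s))
      have h4 := hg1d s hs0
      have hkey : Real.exp (γs*(t-s)) * Real.exp (β*s) =
          Real.exp (γs*t) * Real.exp ((β-γs)*s) := by
        rw [← Real.exp_add, ← Real.exp_add]; congr 1; ring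
      calc ‖NormedSpace.exp ((t-s) • S) (g1 s (xh s) (yh s) - g1 s (xh' s) (yh' s))‖
          ≤ Real.exp (γs*(t-s)) * ‖g1 s (xh s) (yh s) - g1 s (xh' s) (yh' s)‖ := h3
        _ ≤ Real.exp (γs*(t-s)) * (K * (Real.exp (β*s) * D)) := by
            exact mul_le_mul_of_nonneg_left h4 (Real.exp_pos _).le
        _ = (Real.exp (γs*(t-s)) * Real.exp (β*s)) * (K*D) := by ring
        _ = (Real.exp (γs*t) * Real.exp ((β-γs)*s)) * (K*D) := by rw [hkey]
        _ = K*D*Real.exp (γs*t) * Real.exp ((β-γs)*s) := by ring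
    have h5 : ∫ s in (0:ℝ)..t, K*D*Real.exp (γs*t) * Real.exp ((β-γs)*s) =
        K*D*Real.exp (γs*t) * ((Real.exp ((β-γs)*t) - 1)/(β-γs)) := by
      rw [intervalIntegral.integral_const_mul, my_integral_exp_mul hc₁.ne]
      norm_num
    have h6 : |∫ s in (0:ℝ)..t, K*D*Real.exp (γs*t) * Real.exp ((β-γs)*s)| ≤
        K*D*Real.exp (β*t) / (γs - β) := by
      rw [h5]
      have hB1 : 1 ≤ Real.exp ((β-γs)*t) := Real.one_le_exp (by nlinarith [mul_nonneg (neg_nonneg.mpr hc₁.le) (neg_nonneg.mpr ht)])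
      have hAB : Real.exp (γs*t) * Real.exp ((β-γs)*t) = Real.exp (β*t) := by
        rw [← Real.exp_add]; congr 1; ring
      have hApos := Real.exp_pos (γs*t)
      have hgsβ : 0 < γs - β := by linarith
      have hKD : 0 ≤ K*D := mul_nonneg hK.le hD0
      have hV : K*D*Real.exp (γs*t) * ((Real.exp ((β-γs)*t) - 1)/(β-γs)) ≤ 0 := by
        apply mul_nonpos_of_nonneg_of_nonpos
        · exact mul_nonneg hKD hApos.le
        · apply div_nonpos_of_nonneg_of_nonpos (by linarith) hc₁.le
      rw [abs_of_nonpos hV]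
      have hrw : -(K*D*Real.exp (γs*t) * ((Real.exp ((β-γs)*t) - 1)/(β-γs))) =
          (K*D*(Real.exp (γs*t)*(Real.exp ((β-γs)*t) - 1)))/(γs-β) := by
        rw [show β - γs = -(γs - β) by ring, div_neg]
        ring
      rw [hrw]
      have hABK : K*D*(Real.exp (γs*t)*Real.exp ((β-γs)*t)) = K*D*Real.exp (β*t) := by
        rw [hAB]
      gcongr
      nlinarith [hABK, mul_nonneg hKD hApos.le]
    have hEpos := (Real.exp_pos (-β*t)).le
    have hchain : Real.exp (-β*t) * ‖xh t - xh' t‖ ≤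
        Real.exp (-β*t) * (Real.exp (γs*t)*‖x0 - x0'‖ + K*D*Real.exp (β*t)/(γs-β)) := by
      apply mul_le_mul_of_nonneg_left _ hEpos
      rw [heq]
      refine (norm_add_le _ _).trans ?_
      exact add_le_add h1 (h2.trans h6)
    refine hchain.trans ?_
    have hE1 : Real.exp (-β*t) * Real.exp (γs*t) ≤ 1 := by
      rw [← Real.exp_add]
      exact Real.exp_le_one_iff.mpr (by nlinarith)
    have hE2 : Real.exp (-β*t) * Real.exp (β*t) = 1 := by
      rw [← Real.exp_add]; ring_nf; exact Real.exp_zero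
    have hKeq : K/(γs-β) = ε*K/(γ+ε*γs) := by
      rw [div_eq_div_iff (by linarith) hγεγs.ne']
      have hεβ : ε*β = -γ := by rw [hβ]; field_simp
      linear_combination K * hεβ
    have hgsβ : 0 < γs - β := by linarith
    have hexpand : Real.exp (-β*t) * (Real.exp (γs*t)*‖x0 - x0'‖ + K*D*Real.exp (β*t)/(γs-β)) =
        (Real.exp (-β*t) * Real.exp (γs*t))*‖x0 - x0'‖ +
          (K*D/(γs-β))*(Real.exp (-β*t) * Real.exp (β*t)) := by ring
    rw [hexpand, hE2]
    have hn0 := norm_nonneg (x0 - x0')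
    have hfin : (K*D/(γs-β)) = (ε*K/(γ+ε*γs)) * D := by
      rw [← hKeq]; ring
    nlinarith [mul_le_mul_of_nonneg_right hE1 hn0, div_nonneg (mul_nonneg hK.le hD0) hgsβ.le]
  -- FAST bound
  have fastBound : ∀ t ≤ (0:ℝ), Real.exp (-β*t) * ‖yh t - yh' t‖ ≤ (-K/(γ+γf)) * D := by
    intro t ht
    have hsub : Set.Iic t ⊆ Set.Iic (0:ℝ) := Set.Iic_subset_Iic.mpr ht
    obtain ⟨M0, hM0⟩ := hg0
    have hg2z : ∀ s ≤ (0:ℝ), ‖g2 s 0 0‖ ≤ M0 * Real.exp (β*s) := by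
      intro s hs
      have h0 := hM0 s hs
      have hp := Real.exp_pos ((γ/ε) * s)
      have he : Real.exp (β*s) * Real.exp ((γ/ε)*s) = 1 := by
        rw [← Real.exp_add, hβ]
        ring_nf
        exact Real.exp_zero
      have hg1n := norm_nonneg (g1 s 0 0)
      have hg2n := norm_nonneg (g2 s 0 0)
      nlinarith [mul_le_mul_of_nonneg_left h0 (Real.exp_pos (β*s)).le]
    letI : NormedAlgebra ℚ (E₂ →L[ℝ] E₂) := NormedAlgebra.restrictScalars ℚ ℝ (E₂ →L[ℝ] E₂)
    have hB : Continuous fun s : ℝ => NormedSpace.exp (((t-s)/ε) • F) :=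
      NormedSpace.exp_continuous.comp
        (((continuous_const.sub continuous_id).div_const ε).smul continuous_const)
    have mkInt : ∀ (u : ℝ → E₁) (v : ℝ → E₂),
        AEStronglyMeasurable (fun s => g2 s (u s) (v s)) (volume.restrict (Set.Iic (0:ℝ))) →
        (∀ s ≤ (0:ℝ), ‖u s‖ ≤ Real.exp (β*s) * negNorm β u) →
        (∀ s ≤ (0:ℝ), ‖v s‖ ≤ Real.exp (β*s) * negNorm β v) →
        IntegrableOn (fun s => NormedSpace.exp (((t-s)/ε) • F) (g2 s (u s) (v s)))
          (Set.Iic t) := by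
      intro u v hm hu hv
      have hmes : AEStronglyMeasurable
          (fun s => NormedSpace.exp (((t-s)/ε) • F) (g2 s (u s) (v s)))
          (volume.restrict (Set.Iic t)) :=
        isBoundedBilinearMap_apply.continuous.comp_aestronglyMeasurable
          (hB.aestronglyMeasurable.prodMk (hm.mono_measure (Measure.restrict_mono hsub le_rfl)))
      refine Integrable.mono'
        ((my_integrableOn_exp_mul_Iic hd t).const_mul
          ((K*(negNorm β u + negNorm β v) + M0) * Real.exp ((γf/ε)*t))) hmes ?_
      rw [ae_restrict_iff' measurableSet_Iic]
      refine Eventually.of_forall fun s hs => ?_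
      have hst2 : s ≤ t := hs
      have hs0 : s ≤ 0 := le_trans hst2 ht
      have h1 := hF ((t-s)/ε) (div_nonneg (by linarith) hε.le) (g2 s (u s) (v s))
      have htri : ‖g2 s (u s) (v s)‖ ≤ ‖g2 s (u s) (v s) - g2 s 0 0‖ + ‖g2 s 0 0‖ := by
        simpa using norm_add_le (g2 s (u s) (v s) - g2 s 0 0) (g2 s 0 0)
      have h3 := hg2l s (u s) (v s) 0 0
      simp only [sub_zero] at h3
      have h4 := hg2z s hs0
      have h5 := hu s hs0
      have h6 := hv s hs0
      have hkey : Real.exp (γf*((t-s)/ε)) * Real.exp (β*s) =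
          Real.exp ((γf/ε)*t) * Real.exp (d*s) := by
        rw [← Real.exp_add, ← Real.exp_add, hddef]
        congr 1
        field_simp
        ring
      have hexpβ := (Real.exp_pos (β*s)).le
      have hexpγf := (Real.exp_pos (γf*((t-s)/ε))).le
      calc ‖NormedSpace.exp (((t-s)/ε) • F) (g2 s (u s) (v s))‖
          ≤ Real.exp (γf*((t-s)/ε)) * ‖g2 s (u s) (v s)‖ := h1
        _ ≤ Real.exp (γf*((t-s)/ε)) *
            ((K*(negNorm β u + negNorm β v) + M0) * Real.exp (β*s)) := by
            apply mul_le_mul_of_nonneg_left _ hexpγf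
            nlinarith
        _ = (Real.exp (γf*((t-s)/ε)) * Real.exp (β*s)) * (K*(negNorm β u + negNorm β v) + M0) := by
            ring
        _ = (Real.exp ((γf/ε)*t) * Real.exp (d*s)) * (K*(negNorm β u + negNorm β v) + M0) := by
            rw [hkey]
        _ = (K*(negNorm β u + negNorm β v) + M0) * Real.exp ((γf/ε)*t) * Real.exp (d*s) := by
            ring
    have hpi := mkInt xh yh hm2 hxhpt hyhpt
    have hpi' := mkInt xh' yh' hm2' hxhpt' hyhpt'
    have heq : yh t - yh' t = (1/ε) • ∫ s in Set.Iic t,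
        (NormedSpace.exp (((t-s)/ε) • F) (g2 s (xh s) (yh s)) -
          NormedSpace.exp (((t-s)/ε) • F) (g2 s (xh' s) (yh' s))) := by
      rw [(hfix t ht).2, (hfix' t ht).2]
      simp only [LPfast]
      rw [← smul_sub, ← integral_sub hpi hpi']
    have h2 : ‖∫ s in Set.Iic t,
        (NormedSpace.exp (((t-s)/ε) • F) (g2 s (xh s) (yh s)) -
          NormedSpace.exp (((t-s)/ε) • F) (g2 s (xh' s) (yh' s)))‖ ≤
        ∫ s in Set.Iic t, K*D*Real.exp ((γf/ε)*t) * Real.exp (d*s) := by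
      have hint : Integrable (fun s => K*D*Real.exp ((γf/ε)*t) * Real.exp (d*s))
          (volume.restrict (Set.Iic t)) := by
        simpa [mul_assoc] using (my_integrableOn_exp_mul_Iic hd t).const_mul
          (K*D*Real.exp ((γf/ε)*t))
      refine norm_integral_le_of_norm_le hint ?_
      rw [ae_restrict_iff' measurableSet_Iic]
      refine Eventually.of_forall fun s hs => ?_
      have hst2 : s ≤ t := hs
      have hs0 : s ≤ 0 := le_trans hst2 ht
      rw [← map_sub]
      have h1 := hF ((t-s)/ε) (div_nonneg (by linarith) hε.le)
        (g2 s (xh s) (yh s) - g2 s (xh' s) (yh' s))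
      have h4 := hg2d s hs0
      have hkey : Real.exp (γf*((t-s)/ε)) * Real.exp (β*s) =
          Real.exp ((γf/ε)*t) * Real.exp (d*s) := by
        rw [← Real.exp_add, ← Real.exp_add, hddef]
        congr 1
        field_simp
        ring
      calc ‖NormedSpace.exp (((t-s)/ε) • F)
            (g2 s (xh s) (yh s) - g2 s (xh' s) (yh' s))‖
          ≤ Real.exp (γf*((t-s)/ε)) * ‖g2 s (xh s) (yh s) - g2 s (xh' s) (yh' s)‖ := h1
        _ ≤ Real.exp (γf*((t-s)/ε)) * (K * (Real.exp (β*s) * D)) := by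
            exact mul_le_mul_of_nonneg_left h4 (Real.exp_pos _).le
        _ = (Real.exp (γf*((t-s)/ε)) * Real.exp (β*s)) * (K*D) := by ring
        _ = (Real.exp ((γf/ε)*t) * Real.exp (d*s)) * (K*D) := by rw [hkey]
        _ = K*D*Real.exp ((γf/ε)*t) * Real.exp (d*s) := by ring
    have h5 : ∫ s in Set.Iic t, K*D*Real.exp ((γf/ε)*t) * Real.exp (d*s) =
        K*D*Real.exp ((γf/ε)*t) * (Real.exp (d*t)/d) := by
      rw [MeasureTheory.integral_const_mul, my_integral_exp_mul_Iic hd t]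
    have hnorm : ‖yh t - yh' t‖ ≤
        (1/ε) * (K*D*Real.exp ((γf/ε)*t) * (Real.exp (d*t)/d)) := by
      rw [heq, norm_smul, Real.norm_eq_abs, abs_of_pos (by positivity : (0:ℝ) < 1/ε)]
      rw [← h5]
      exact mul_le_mul_of_nonneg_left h2 (by positivity)
    have hABe : Real.exp ((γf/ε)*t) * Real.exp (d*t) = Real.exp (β*t) := by
      rw [← Real.exp_add, hddef]; congr 1; ring
    have hE2 : Real.exp (-β*t) * Real.exp (β*t) = 1 := by
      rw [← Real.exp_add]; ring_nf; exact Real.exp_zero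
    have hchain : Real.exp (-β*t) * ‖yh t - yh' t‖ ≤
        Real.exp (-β*t) * ((1/ε) * (K*D*Real.exp ((γf/ε)*t) * (Real.exp (d*t)/d))) :=
      mul_le_mul_of_nonneg_left hnorm (Real.exp_pos _).le
    refine hchain.trans ?_
    have hrw : Real.exp (-β*t) * ((1/ε) * (K*D*Real.exp ((γf/ε)*t) * (Real.exp (d*t)/d)))
        = (Real.exp (-β*t) * (Real.exp ((γf/ε)*t) * Real.exp (d*t))) * (K*D/(ε*d)) := by
      field_simp
    rw [hrw, hABe, hE2, one_mul]
    have hεd : ε * d = -(γ + γf) := by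
      rw [hddef, hβ]
      field_simp
      ring
    have heq2 : K*D/(ε*d) = (-K/(γ+γf)) * D := by
      rw [hεd, div_neg, neg_div]
      ring
    rw [heq2]
  -- assemble
  have hNxle : Nx ≤ ‖x0 - x0'‖ + (ε*K/(γ+ε*γs)) * D := by
    rw [hNxdef]
    exact ciSup_le fun t => slowBound t.1 t.2
  have hNyle : Ny ≤ (-K/(γ+γf)) * D := by
    rw [hNydef]
    exact ciSup_le fun t => fastBound t.1 t.2
  have hy0 : ‖yh 0 - yh' 0‖ ≤ Ny := by
    have h : Real.exp (-β*(0:ℝ)) * ‖yh 0 - yh' 0‖ ≤ Ny :=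
      le_ciSup hby (⟨0, Set.self_mem_Iic⟩ : Set.Iic (0:ℝ))
    simpa using h
  clear_value β d Nx Ny D
  set ρ : ℝ := ε * K / (γ + ε * γs) - K / (γ + γf) with hρdef
  clear_value ρ
  have hDle : D ≤ ‖x0 - x0'‖ + ρ * D := by
    have hDd : D = Nx + Ny := hDdef
    have hρe : ρ * D = (ε*K/(γ+ε*γs)) * D + (-K/(γ+γf)) * D := by
      rw [hρdef]; ring
    linarith
  have h1ρ : 0 < 1 - ρ := by linarith
  have hDfin : D ≤ ‖x0 - x0'‖ * (1/(1-ρ)) := by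
    rw [mul_one_div, le_div_iff₀ h1ρ]
    nlinarith
  have hcK : 0 ≤ -K/(γ+γf) := by
    rw [neg_div, ← div_neg]
    exact div_nonneg hK.le (by linarith)
  calc ‖yh 0 - yh' 0‖ ≤ Ny := hy0
    _ ≤ (-K/(γ+γf)) * D := hNyle
    _ ≤ (-K/(γ+γf)) * (‖x0 - x0'‖ * (1/(1-ρ))) := mul_le_mul_of_nonneg_left hDfin hcK
    _ = (-K/(γ+γf)) * (1/(1-ρ)) * ‖x0 - x0'‖ := by ring
end
end

section
/- (Positive invariance of the slow manifold, pathwise.) Let T ≥ 0 and let (x̂, ŷ) : (−∞, T] → E₁ × E₂ be continuous, satisfying for all u ≤ t ≤ T the variation-of-constants identities x̂(t) = exp((t−u)S)x̂(u) + ∫_u^t exp((t−s)S) ĝ₁(s, x̂(s), ŷ(s)) ds and ŷ(t) = exp(((t−u)/ε)F) ŷ(u) + (1/ε)∫_u^t exp(((t−s)/ε)F) ĝ₂(s, x̂(s), ŷ(s)) ds, and suppose the restriction of (x̂, ŷ) to (−∞,0] belongs to C_β^−(E₁ × E₂). Then for every s ∈ [0, T], the shifted function t ↦ (x̂(t+s),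 ŷ(t+s)), t ≤ 0, also belongs to C_β^−(E₁ × E₂), and ŷ(s) = (1/ε)∫_{−∞}^s exp(((s−r)/ε)F) ĝ₂(r, x̂(r), ŷ(r)) dr; that is, the shifted trajectory is a C_β^− solution of the Lyapunov–Perron integral equation associated with the time-shifted nonlinearities (r,x,y) ↦ ĝᵢ(r+s, x, y) and slow initial value x̂(s). -/
open MeasureTheory Real Filter

noncomputable section

variable {E₁ E₂ : Type*}
  [NormedAddCommGroup E₁] [NormedSpace ℝ E₁]
  [NormedAddCommGroup E₂] [NormedSpace ℝ E₂]

set_option synthInstance.maxHeartbeats 1000000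
set_option maxHeartbeats 2000000

section AuxiliaryLemmas

lemma exp_comp_apply {E : Type*} [NormedAddCommGroup E] [NormedSpace ℝ E] [CompleteSpace E]
    (S : E →L[ℝ] E) (a b : ℝ) (x : E) :
    NormedSpace.exp (a • S) (NormedSpace.exp (b • S) x) = NormedSpace.exp ((a + b) • S) x := by
  letI : NormedAlgebra ℚ (E →L[ℝ] E) := NormedAlgebra.restrictScalars ℚ ℝ _
  rw [add_smul, NormedSpace.exp_add_of_commute (((Commute.refl S).smul_left a).smul_right b),
    ContinuousLinearMap.mul_apply]

lemma exp_cont {E : Type*} [NormedAddCommGroup E] [NormedSpace ℝ E] [CompleteSpace E]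
    (S : E →L[ℝ] E) : Continuous fun t : ℝ => NormedSpace.exp (t • S) := by
  letI : NormedAlgebra ℚ (E →L[ℝ] E) := NormedAlgebra.restrictScalars ℚ ℝ _
  exact NormedSpace.exp_continuous.comp (continuous_id.smul continuous_const)

lemma integrableOn_exp_mul_Iic' {c : ℝ} (hc : 0 < c) (a : ℝ) :
    MeasureTheory.IntegrableOn (fun r : ℝ => Real.exp (c * r)) (Set.Iic a) := by
  have h : MeasureTheory.IntegrableOn (fun x : ℝ => Real.exp (-c * x)) (Set.Ioi (-a)) :=
    exp_neg_integrableOn_Ioi (-a) hc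
  have h2 := (MeasurePreserving.integrableOn_comp_preimage
      (Measure.measurePreserving_neg (volume : Measure ℝ))
      (Homeomorph.neg ℝ).measurableEmbedding).2 h
  have hpre : (Neg.neg ⁻¹' Set.Ioi (-a) : Set ℝ) = Set.Iio a := by
    ext x; simp
  rw [hpre] at h2
  have h3 : MeasureTheory.IntegrableOn (fun r : ℝ => Real.exp (c * r)) (Set.Iio a) := by
    apply h2.congr_fun ?_ measurableSet_Iio
    intro x _; simp [Function.comp]
  exact (integrableOn_Iic_iff_integrableOn_Iio).2 h3

lemma meas_comp {E₁ E₂ E : Type*}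
    [NormedAddCommGroup E₁] [NormedSpace ℝ E₁] [FiniteDimensional ℝ E₁] [MeasurableSpace E₁] [BorelSpace E₁]
    [NormedAddCommGroup E₂] [NormedSpace ℝ E₂] [FiniteDimensional ℝ E₂] [MeasurableSpace E₂] [BorelSpace E₂]
    [NormedAddCommGroup E] [MeasurableSpace E] [BorelSpace E]
    {K : ℝ} (hK : 0 < K)
    (g : ℝ → E₁ → E₂ → E) (hgm : ∀ x y, Measurable fun t => g t x y)
    (hgl : ∀ t x₁ y₁ x₂ y₂, ‖g t x₁ y₁ - g t x₂ y₂‖ ≤ K * (‖x₁ - x₂‖ + ‖y₁ - y₂‖))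
    {x : ℝ → E₁} {y : ℝ → E₂} (hx : Continuous x) (hy : Continuous y) :
    Measurable fun t => g t (x t) (y t) := by
  have hcont : ∀ t, Continuous fun p : E₁ × E₂ => g t p.1 p.2 := by
    intro t
    refine (LipschitzWith.of_dist_le_mul (K := Real.toNNReal (2*K))
      (f := fun p : E₁ × E₂ => g t p.1 p.2) ?_).continuous
    intro p q
    have h1 : ‖p.1 - q.1‖ ≤ dist p q := by rw [← dist_eq_norm, Prod.dist_eq]; exact le_max_left _ _
    have h2 : ‖p.2 - q.2‖ ≤ dist p q := by rw [← dist_eq_norm, Prod.dist_eq]; exact le_max_right _ _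
    rw [dist_eq_norm]
    calc ‖g t p.1 p.2 - g t q.1 q.2‖ ≤ K * (‖p.1 - q.1‖ + ‖p.2 - q.2‖) := hgl t _ _ _ _
      _ ≤ K * (dist p q + dist p q) := by nlinarith
      _ = (Real.toNNReal (2*K) : ℝ) * dist p q := by
          rw [Real.coe_toNNReal _ (by positivity)]; ring
  have hu : Measurable (Function.uncurry fun (p : E₁ × E₂) (t : ℝ) => g t p.1 p.2) :=
    measurable_uncurry_of_continuous_of_measurable (fun t => hcont t) (fun p => hgm p.1 p.2)
  have heq : (fun t => g t (x t) (y t)) =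
      (Function.uncurry fun (p : E₁ × E₂) (t : ℝ) => g t p.1 p.2) ∘ (fun t => ((x t, y t), t)) := rfl
  rw [heq]
  exact hu.comp ((hx.measurable.prodMk hy.measurable).prodMk measurable_id)

lemma norm_bound_aux {E₁ E₂ E : Type*} [NormedAddCommGroup E₁] [NormedAddCommGroup E₂] [NormedAddCommGroup E]
    {K γ ε T : ℝ} (hK : 0 ≤ K) (hT : 0 ≤ T)
    (g : ℝ → E₁ → E₂ → E) (xh : ℝ → E₁) (yh : ℝ → E₂)
    (hgl : ∀ t x₁ y₁ x₂ y₂, ‖g t x₁ y₁ - g t x₂ y₂‖ ≤ K * (‖x₁ - x₂‖ + ‖y₁ - y₂‖))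
    {M0 Bx By M1 Cx Cy : ℝ}
    (hM0 : ∀ r ≤ (0:ℝ), ‖g r 0 0‖ ≤ M0 * Real.exp (-(γ/ε) * r))
    (hBx : ∀ r ≤ (0:ℝ), ‖xh r‖ ≤ Bx * Real.exp (-(γ/ε) * r))
    (hBy : ∀ r ≤ (0:ℝ), ‖yh r‖ ≤ By * Real.exp (-(γ/ε) * r))
    (hM1 : ∀ r ∈ Set.Icc (0:ℝ) T, ‖g r 0 0‖ ≤ M1)
    (hCx : ∀ r ∈ Set.Icc (0:ℝ) T, ‖xh r‖ ≤ Cx)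
    (hCy : ∀ r ∈ Set.Icc (0:ℝ) T, ‖yh r‖ ≤ Cy) :
    ∀ r ≤ T, ‖g r (xh r) (yh r)‖ ≤
      (max (M0 + K*(Bx+By)) (M1 + K*(Cx+Cy))) * Real.exp (-(γ/ε) * min r 0) := by
  intro r hr
  have h1 : ‖g r (xh r) (yh r)‖ ≤ ‖g r 0 0‖ + K * (‖xh r‖ + ‖yh r‖) := by
    have h2 := hgl r (xh r) (yh r) 0 0
    simp only [sub_zero] at h2
    have h3 := norm_add_le (g r (xh r) (yh r) - g r 0 0) (g r 0 0)
    rw [sub_add_cancel] at h3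
    linarith
  rcases le_total r 0 with hr0 | hr0
  · rw [min_eq_left hr0]
    have e := (Real.exp_pos (-(γ/ε)*r)).le
    calc ‖g r (xh r) (yh r)‖ ≤ ‖g r 0 0‖ + K * (‖xh r‖ + ‖yh r‖) := h1
      _ ≤ M0 * Real.exp (-(γ/ε)*r) + K * (Bx * Real.exp (-(γ/ε)*r) + By * Real.exp (-(γ/ε)*r)) := by
          have a1 := hM0 r hr0; have a2 := hBx r hr0; have a3 := hBy r hr0
          nlinarith [norm_nonneg (xh r), norm_nonneg (yh r)]
      _ = (M0 + K*(Bx+By)) * Real.exp (-(γ/ε)*r) := by ring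
      _ ≤ _ := mul_le_mul_of_nonneg_right (le_max_left _ _) e
  · rw [min_eq_right hr0]
    simp only [mul_zero, Real.exp_zero, mul_one]
    have hmem : r ∈ Set.Icc 0 T := ⟨hr0, hr⟩
    calc ‖g r (xh r) (yh r)‖ ≤ ‖g r 0 0‖ + K * (‖xh r‖ + ‖yh r‖) := h1
      _ ≤ M1 + K * (Cx + Cy) := by
          nlinarith [hM1 r hmem, hCx r hmem, hCy r hmem, norm_nonneg (xh r), norm_nonneg (yh r)]
      _ ≤ _ := le_max_right _ _

end AuxiliaryLemmas

/-- Positive invariance of the slow manifold, pathwise: the time-shift of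
a `C_β^-` solution of the variation-of-constants identities on `(-∞,T]` is again in `C_β^-`
and solves the Lyapunov–Perron integral equation for the shifted nonlinearities. -/
theorem slowManifold_positively_invariant
    {E₁ E₂ : Type*}
    [NormedAddCommGroup E₁] [NormedSpace ℝ E₁] [FiniteDimensional ℝ E₁] [MeasurableSpace E₁] [BorelSpace E₁]
    [NormedAddCommGroup E₂] [NormedSpace ℝ E₂] [FiniteDimensional ℝ E₂] [MeasurableSpace E₂] [BorelSpace E₂]
    (S : E₁ →L[ℝ] E₁) (F : E₂ →L[ℝ] E₂)
    (γs γf γ K ε : ℝ)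
    (hγs : 0 < γs) (hγf : γf < 0) (hγ : 0 < γ) (hK : 0 < K)
    (hgap : K < -(γ + γf)) (hε : 0 < ε)
    (hS : ∀ t ≤ (0:ℝ), ∀ x : E₁, ‖NormedSpace.exp (t • S) x‖ ≤ Real.exp (γs * t) * ‖x‖)
    (hF : ∀ t ≥ (0:ℝ), ∀ y : E₂, ‖NormedSpace.exp (t • F) y‖ ≤ Real.exp (γf * t) * ‖y‖)
    (g1 : ℝ → E₁ → E₂ → E₁) (g2 : ℝ → E₁ → E₂ → E₂)
    (hg1m : ∀ x y, Measurable fun t => g1 t x y)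
    (hg2m : ∀ x y, Measurable fun t => g2 t x y)
    (hg1b : ∀ x y r, ∃ M, ∀ t : ℝ, |t| ≤ r → ‖g1 t x y‖ ≤ M)
    (hg2b : ∀ x y r, ∃ M, ∀ t : ℝ, |t| ≤ r → ‖g2 t x y‖ ≤ M)
    (hg1l : ∀ t x₁ y₁ x₂ y₂, ‖g1 t x₁ y₁ - g1 t x₂ y₂‖ ≤ K * (‖x₁ - x₂‖ + ‖y₁ - y₂‖))
    (hg2l : ∀ t x₁ y₁ x₂ y₂, ‖g2 t x₁ y₁ - g2 t x₂ y₂‖ ≤ K * (‖x₁ - x₂‖ + ‖y₁ - y₂‖))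
    (hg0 : ∃ M, ∀ t ≤ (0:ℝ),
      Real.exp ((γ/ε) * t) * (‖g1 t 0 0‖ + ‖g2 t 0 0‖) ≤ M)
    (T : ℝ) (hT : 0 ≤ T)
    (xh : ℝ → E₁) (yh : ℝ → E₂)
    (hcx : ContinuousOn xh (Set.Iic T)) (hcy : ContinuousOn yh (Set.Iic T))
    (hvoc : ∀ u t : ℝ, u ≤ t → t ≤ T →
      xh t = NormedSpace.exp ((t - u) • S) (xh u) +
          ∫ s in u..t, NormedSpace.exp ((t - s) • S) (g1 s (xh s) (yh s)) ∧
      yh t = NormedSpace.exp (((t - u)/ε) • F) (yh u) +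
          (1/ε) • ∫ s in u..t, NormedSpace.exp (((t - s)/ε) • F) (g2 s (xh s) (yh s)))
    (hmem : MemCneg (-γ/ε) xh ∧ MemCneg (-γ/ε) yh) :
    ∀ s : ℝ, 0 ≤ s → s ≤ T →
      MemCneg (-γ/ε) (fun t => xh (t + s)) ∧
      MemCneg (-γ/ε) (fun t => yh (t + s)) ∧
      IntegrableOn (fun r => NormedSpace.exp (((s - r)/ε) • F) (g2 r (xh r) (yh r)))
        (Set.Iic s) ∧
      yh s = (1/ε) • ∫ r in Set.Iic s,
        NormedSpace.exp (((s - r)/ε) • F) (g2 r (xh r) (yh r)) ∧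
      (∀ t ≤ (0:ℝ),
        xh (t + s) = LPslow S (fun r x y => g1 (r + s) x y) (xh s)
            (fun r => xh (r + s)) (fun r => yh (r + s)) t ∧
        yh (t + s) = LPfast F (fun r x y => g2 (r + s) x y) ε
            (fun r => xh (r + s)) (fun r => yh (r + s)) t) := by
  -- basic positivity
  have hν : 0 < γ/ε := div_pos hγ hε
  have hcpos : 0 < -(γ + γf)/ε := div_pos (by linarith) hε
  set c : ℝ := -(γ + γf)/ε with hc
  -- weight normalization
  have hw : ∀ t : ℝ, -(-γ/ε) * t = (γ/ε) * t := fun t => by ring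
  -- bounds from membership
  obtain ⟨hxc0, Bx, hBxu⟩ := hmem.1
  obtain ⟨hyc0, By, hByu⟩ := hmem.2
  have hBx' : ∀ t ≤ (0:ℝ), Real.exp ((γ/ε) * t) * ‖xh t‖ ≤ Bx := by
    intro t ht
    have := hBxu (Set.mem_range_self (⟨t, ht⟩ : Set.Iic (0:ℝ)))
    rwa [hw] at this
  have hBy' : ∀ t ≤ (0:ℝ), Real.exp ((γ/ε) * t) * ‖yh t‖ ≤ By := by
    intro t ht
    have := hByu (Set.mem_range_self (⟨t, ht⟩ : Set.Iic (0:ℝ)))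
    rwa [hw] at this
  have expmul : ∀ a : ℝ, Real.exp (-(γ/ε) * a) * Real.exp ((γ/ε) * a) = 1 := by
    intro a; rw [← Real.exp_add, show -(γ/ε)*a + (γ/ε)*a = 0 by ring, Real.exp_zero]
  have hxbd : ∀ t ≤ (0:ℝ), ‖xh t‖ ≤ Bx * Real.exp (-(γ/ε) * t) := by
    intro t ht
    have h := mul_le_mul_of_nonneg_left (hBx' t ht) (Real.exp_pos (-(γ/ε)*t)).le
    rw [← mul_assoc, expmul, one_mul] at h
    linarith [h]
  have hybd : ∀ t ≤ (0:ℝ), ‖yh t‖ ≤ By * Real.exp (-(γ/ε) * t) := by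
    intro t ht
    have h := mul_le_mul_of_nonneg_left (hBy' t ht) (Real.exp_pos (-(γ/ε)*t)).le
    rw [← mul_assoc, expmul, one_mul] at h
    linarith [h]
  have hBx0 : 0 ≤ Bx := le_trans (by simpa using norm_nonneg (xh 0)) (hBx' 0 le_rfl)
  have hBy0 : 0 ≤ By := le_trans (by simpa using norm_nonneg (yh 0)) (hBy' 0 le_rfl)
  -- compact bounds on [0,T]
  obtain ⟨Cx, hCx⟩ := (isCompact_Icc (a := (0:ℝ)) (b := T)).exists_bound_of_continuousOn
    (hcx.mono (fun r hr => hr.2))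
  obtain ⟨Cy, hCy⟩ := (isCompact_Icc (a := (0:ℝ)) (b := T)).exists_bound_of_continuousOn
    (hcy.mono (fun r hr => hr.2))
  have hCx0 : 0 ≤ Cx := le_trans (norm_nonneg _) (hCx 0 ⟨le_rfl, hT⟩)
  have hCy0 : 0 ≤ Cy := le_trans (norm_nonneg _) (hCy 0 ⟨le_rfl, hT⟩)
  -- bounds on g i (·,0,0)
  obtain ⟨M0, hM0⟩ := hg0
  have hM01 : ∀ r ≤ (0:ℝ), ‖g1 r 0 0‖ ≤ M0 * Real.exp (-(γ/ε) * r) := by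
    intro r hr
    have h := hM0 r hr
    have h2 := mul_le_mul_of_nonneg_left h (Real.exp_pos (-(γ/ε)*r)).le
    rw [← mul_assoc, expmul, one_mul] at h2
    nlinarith [norm_nonneg (g2 r (0:E₁) (0:E₂)), Real.exp_pos (-(γ/ε)*r)]
  have hM02 : ∀ r ≤ (0:ℝ), ‖g2 r 0 0‖ ≤ M0 * Real.exp (-(γ/ε) * r) := by
    intro r hr
    have h := hM0 r hr
    have h2 := mul_le_mul_of_nonneg_left h (Real.exp_pos (-(γ/ε)*r)).le
    rw [← mul_assoc, expmul, one_mul] at h2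
    nlinarith [norm_nonneg (g1 r (0:E₁) (0:E₂)), Real.exp_pos (-(γ/ε)*r)]
  obtain ⟨M1, hM1⟩ := hg1b 0 0 T
  obtain ⟨M2, hM2⟩ := hg2b 0 0 T
  have hM1' : ∀ r ∈ Set.Icc (0:ℝ) T, ‖g1 r 0 0‖ ≤ M1 := fun r hr =>
    hM1 r (by rw [abs_of_nonneg hr.1]; exact hr.2)
  have hM2' : ∀ r ∈ Set.Icc (0:ℝ) T, ‖g2 r 0 0‖ ≤ M2 := fun r hr =>
    hM2 r (by rw [abs_of_nonneg hr.1]; exact hr.2)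
  -- combined pointwise bounds
  set C1 : ℝ := max (M0 + K*(Bx+By)) (M1 + K*(Cx+Cy)) with hC1
  set C2 : ℝ := max (M0 + K*(Bx+By)) (M2 + K*(Cx+Cy)) with hC2
  have hb1 : ∀ r ≤ T, ‖g1 r (xh r) (yh r)‖ ≤ C1 * Real.exp (-(γ/ε) * min r 0) :=
    norm_bound_aux hK.le hT g1 xh yh hg1l hM01 hxbd hybd hM1' hCx hCy
  have hb2 : ∀ r ≤ T, ‖g2 r (xh r) (yh r)‖ ≤ C2 * Real.exp (-(γ/ε) * min r 0) :=
    norm_bound_aux hK.le hT g2 xh yh hg2l hM02 hxbd hybd hM2' hCx hCy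
  have hC10 : 0 ≤ C1 := le_trans (by nlinarith [norm_nonneg (g1 0 (0:E₁) (0:E₂)), hM1' 0 ⟨le_rfl, hT⟩]) (le_max_right _ _)
  have hC20 : 0 ≤ C2 := le_trans (by nlinarith [norm_nonneg (g2 0 (0:E₁) (0:E₂)), hM2' 0 ⟨le_rfl, hT⟩]) (le_max_right _ _)
  -- continuous global modifications
  have hx'c : Continuous (fun r => xh (min r T)) :=
    hcx.comp_continuous (continuous_id.min continuous_const) (fun r => min_le_right r T)
  have hy'c : Continuous (fun r => yh (min r T)) :=
    hcy.comp_continuous (continuous_id.min continuous_const) (fun r => min_le_right r T)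
  -- measurability of composed nonlinearities (primed)
  have hG1m : Measurable (fun r => g1 r (xh (min r T)) (yh (min r T))) :=
    meas_comp hK g1 hg1m hg1l hx'c hy'c
  have hG2m : Measurable (fun r => g2 r (xh (min r T)) (yh (min r T))) :=
    meas_comp hK g2 hg2m hg2l hx'c hy'c
  -- strong measurability of primed integrands
  have hsmF : ∀ τ : ℝ, StronglyMeasurable
      (fun r => NormedSpace.exp (((τ - r)/ε) • F) (g2 r (xh (min r T)) (yh (min r T)))) := by
    intro τ
    have hA : Continuous (fun r : ℝ => NormedSpace.exp (((τ - r)/ε) • F)) :=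
      (exp_cont F).comp ((continuous_const.sub continuous_id).div_const ε)
    exact isBoundedBilinearMap_apply.continuous.comp_stronglyMeasurable
      (hA.stronglyMeasurable.prodMk hG2m.stronglyMeasurable)
  have hsmS : ∀ τ : ℝ, StronglyMeasurable
      (fun r => NormedSpace.exp ((τ - r) • S) (g1 r (xh (min r T)) (yh (min r T)))) := by
    intro τ
    have hA : Continuous (fun r : ℝ => NormedSpace.exp ((τ - r) • S)) :=
      (exp_cont S).comp (continuous_const.sub continuous_id)
    exact isBoundedBilinearMap_apply.continuous.comp_stronglyMeasurable
      (hA.stronglyMeasurable.prodMk hG1m.stronglyMeasurable)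
  -- integrability of fast integrand on Iic τ, for any τ ≤ T
  have hIntF : ∀ τ ≤ T, IntegrableOn
      (fun r => NormedSpace.exp (((τ - r)/ε) • F) (g2 r (xh r) (yh r))) (Set.Iic τ) := by
    intro τ hτ
    have hIp : IntegrableOn
        (fun r => NormedSpace.exp (((τ - r)/ε) • F) (g2 r (xh (min r T)) (yh (min r T))))
        (Set.Iic τ) := by
      have hsplit : Set.Iic τ = Set.Iic (min τ 0) ∪ Set.Ioc (min τ 0) τ :=
        (Set.Iic_union_Ioc_eq_Iic (min_le_left τ 0)).symm
      rw [hsplit]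
      apply IntegrableOn.union
      · -- decaying part
        apply Integrable.mono'
          ((integrableOn_exp_mul_Iic' hcpos (min τ 0)).const_mul (C2 * Real.exp ((γf/ε) * τ)))
          ((hsmF τ).aestronglyMeasurable.restrict)
        filter_upwards [ae_restrict_mem measurableSet_Iic] with r hr
        have hr0 : r ≤ 0 := le_trans hr (min_le_right _ _)
        have hrτ : r ≤ τ := le_trans hr (min_le_left _ _)
        have hrT : r ≤ T := le_trans hrτ hτ
        rw [min_eq_left hrT]
        have hquot : (0:ℝ) ≤ (τ - r)/ε := div_nonneg (by linarith) hε.le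
        calc ‖NormedSpace.exp (((τ - r)/ε) • F) (g2 r (xh r) (yh r))‖
            ≤ Real.exp (γf * ((τ - r)/ε)) * ‖g2 r (xh r) (yh r)‖ := hF _ hquot _
          _ ≤ Real.exp (γf * ((τ - r)/ε)) * (C2 * Real.exp (-(γ/ε) * min r 0)) := by
              exact mul_le_mul_of_nonneg_left (hb2 r hrT) (Real.exp_pos _).le
          _ = C2 * Real.exp (γf * ((τ - r)/ε) + -(γ/ε) * min r 0) := by
              rw [Real.exp_add]; ring
          _ = C2 * Real.exp ((γf/ε) * τ + c * r) := by
              rw [min_eq_left hr0, show γf * ((τ - r)/ε) + -(γ/ε) * r = (γf/ε) * τ + c * r by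
                rw [hc]; field_simp; ring]
          _ = C2 * Real.exp ((γf/ε) * τ) * Real.exp (c * r) := by rw [Real.exp_add]; ring
      · -- compact part
        apply Measure.integrableOn_of_bounded (M := C2 * Real.exp (-(γ/ε) * min τ 0))
          (measure_Ioc_lt_top).ne (hsmF τ).aestronglyMeasurable
        filter_upwards [ae_restrict_mem measurableSet_Ioc] with r hr
        have hrτ : r ≤ τ := hr.2
        have hrT : r ≤ T := le_trans hrτ hτ
        rw [min_eq_left hrT]
        have hquot : (0:ℝ) ≤ (τ - r)/ε := div_nonneg (by linarith) hε.le
        have hminle : min τ 0 ≤ min r 0 := le_min hr.1.le (min_le_right τ 0)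
        calc ‖NormedSpace.exp (((τ - r)/ε) • F) (g2 r (xh r) (yh r))‖
            ≤ Real.exp (γf * ((τ - r)/ε)) * ‖g2 r (xh r) (yh r)‖ := hF _ hquot _
          _ ≤ 1 * (C2 * Real.exp (-(γ/ε) * min r 0)) := by
              apply mul_le_mul (Real.exp_le_one_iff.2 (by nlinarith)) (hb2 r hrT)
                (norm_nonneg _) zero_le_one
          _ ≤ C2 * Real.exp (-(γ/ε) * min τ 0) := by
              rw [one_mul]
              exact mul_le_mul_of_nonneg_left
                (Real.exp_le_exp.2 (by nlinarith)) hC20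
    exact hIp.congr_fun (fun r hr => by dsimp only; rw [min_eq_left (le_trans hr hτ)]) measurableSet_Iic
  -- Lyapunov-Perron representation of yh at any time τ ≤ T
  have hrep : ∀ τ ≤ T, yh τ = (1/ε) • ∫ r in Set.Iic τ,
      NormedSpace.exp (((τ - r)/ε) • F) (g2 r (xh r) (yh r)) := by
    intro τ hτ
    have hInt := hIntF τ hτ
    have h1 : Tendsto (fun u => (1/ε) • ∫ r in u..τ,
        NormedSpace.exp (((τ - r)/ε) • F) (g2 r (xh r) (yh r))) atBot
        (nhds ((1/ε) • ∫ r in Set.Iic τ,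
          NormedSpace.exp (((τ - r)/ε) • F) (g2 r (xh r) (yh r)))) :=
      (intervalIntegral_tendsto_integral_Iic τ hInt tendsto_id).const_smul _
    have h2 : Tendsto (fun u => NormedSpace.exp (((τ - u)/ε) • F) (yh u)) atBot (nhds 0) := by
      apply squeeze_zero_norm' (a := fun u => (By * Real.exp ((γf/ε) * τ)) * Real.exp (c * u))
      · filter_upwards [eventually_le_atBot (min τ 0)] with u hu
        have hu0 : u ≤ 0 := le_trans hu (min_le_right _ _)
        have huτ : u ≤ τ := le_trans hu (min_le_left _ _)
        have hquot : (0:ℝ) ≤ (τ - u)/ε := div_nonneg (by linarith) hε.le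
        calc ‖NormedSpace.exp (((τ - u)/ε) • F) (yh u)‖
            ≤ Real.exp (γf * ((τ - u)/ε)) * ‖yh u‖ := hF _ hquot _
          _ ≤ Real.exp (γf * ((τ - u)/ε)) * (By * Real.exp (-(γ/ε) * u)) := by
              exact mul_le_mul_of_nonneg_left (hybd u hu0) (Real.exp_pos _).le
          _ = By * Real.exp (γf * ((τ - u)/ε) + -(γ/ε) * u) := by rw [Real.exp_add]; ring
          _ = By * Real.exp ((γf/ε) * τ + c * u) := by
              rw [show γf * ((τ - u)/ε) + -(γ/ε) * u = (γf/ε) * τ + c * u by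
                rw [hc]; field_simp; ring]
          _ = (By * Real.exp ((γf/ε) * τ)) * Real.exp (c * u) := by rw [Real.exp_add]; ring
      · have hlin : Tendsto (fun u : ℝ => c * u) atBot atBot :=
          (tendsto_const_mul_atBot_of_pos hcpos).2 tendsto_id
        have h3 := Real.tendsto_exp_atBot.comp hlin
        have h4 := h3.const_mul (By * Real.exp ((γf/ε) * τ))
        simpa using h4
    have h4 : ∀ᶠ u in atBot, (1/ε) • (∫ r in u..τ,
        NormedSpace.exp (((τ - r)/ε) • F) (g2 r (xh r) (yh r))) =
        yh τ - NormedSpace.exp (((τ - u)/ε) • F) (yh u) := by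
      filter_upwards [eventually_le_atBot τ] with u hu
      have hv := (hvoc u τ hu hτ).2
      rw [hv]; abel
    have h5 : Tendsto (fun u => yh τ - NormedSpace.exp (((τ - u)/ε) • F) (yh u)) atBot
        (nhds (yh τ)) := by
      simpa using tendsto_const_nhds.sub h2
    exact (tendsto_nhds_unique (Filter.Tendsto.congr' h4 h1) h5).symm
  -- interval integrability of slow integrand on [a,b] ⊆ (-∞,T]
  have hII1 : ∀ a b d : ℝ, a ≤ b → b ≤ T → IntervalIntegrable
      (fun r => NormedSpace.exp ((d - r) • S) (g1 r (xh r) (yh r))) volume a b := by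
    intro a b d hab hbT
    rw [intervalIntegrable_iff_integrableOn_Ioc_of_le hab]
    obtain ⟨Cop, hCop⟩ := (isCompact_Icc (a := a) (b := b)).exists_bound_of_continuousOn
      ((exp_cont S).comp (continuous_const.sub continuous_id) :
        Continuous fun r : ℝ => NormedSpace.exp ((d - r) • S)).continuousOn
    have hCop0 : 0 ≤ Cop := le_trans (norm_nonneg _) (hCop a ⟨le_rfl, hab⟩)
    have hIp : IntegrableOn
        (fun r => NormedSpace.exp ((d - r) • S) (g1 r (xh (min r T)) (yh (min r T))))
        (Set.Ioc a b) := by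
      apply Measure.integrableOn_of_bounded (M := Cop * (C1 * Real.exp (-(γ/ε) * min a 0)))
        (measure_Ioc_lt_top).ne (hsmS d).aestronglyMeasurable
      filter_upwards [ae_restrict_mem measurableSet_Ioc] with r hr
      have hrT : r ≤ T := le_trans hr.2 hbT
      rw [min_eq_left hrT]
      have hminle : min a 0 ≤ min r 0 :=
        le_min (le_trans (min_le_left a 0) hr.1.le) (min_le_right a 0)
      calc ‖NormedSpace.exp ((d - r) • S) (g1 r (xh r) (yh r))‖
          ≤ ‖NormedSpace.exp ((d - r) • S)‖ * ‖g1 r (xh r) (yh r)‖ :=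
            ContinuousLinearMap.le_opNorm _ _
        _ ≤ Cop * (C1 * Real.exp (-(γ/ε) * min r 0)) := by
            apply mul_le_mul (hCop r ⟨hr.1.le, hr.2⟩) (hb1 r hrT) (norm_nonneg _) hCop0
        _ ≤ Cop * (C1 * Real.exp (-(γ/ε) * min a 0)) := by
            have h9 : Real.exp (-(γ/ε) * min r 0) ≤ Real.exp (-(γ/ε) * min a 0) :=
              Real.exp_le_exp.2 (by nlinarith)
            exact mul_le_mul_of_nonneg_left (mul_le_mul_of_nonneg_left h9 hC10) hCop0
    exact hIp.congr_fun (fun r hr => by dsimp only; rw [min_eq_left (le_trans hr.2 hbT)]) measurableSet_Ioc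
  intro s hs0 hsT
  refine ⟨?_, ?_, hIntF s hsT, hrep s hsT, ?_⟩
  · constructor
    · exact ContinuousOn.comp hcx ((continuous_id.add continuous_const).continuousOn)
        (fun t ht => by simp only [Set.mem_Iic] at ht ⊢; linarith)
    · refine ⟨max Bx Cx, ?_⟩
      rintro v ⟨⟨t, ht⟩, rfl⟩
      simp only [Set.mem_Iic] at ht
      show Real.exp (-(-γ/ε) * t) * ‖xh (t + s)‖ ≤ max Bx Cx
      rw [hw]
      rcases le_total (t + s) 0 with h | h
      · rw [show (γ/ε) * t = -((γ/ε) * s) + (γ/ε) * (t+s) by ring, Real.exp_add, mul_assoc]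
        calc Real.exp (-((γ/ε) * s)) * (Real.exp ((γ/ε) * (t+s)) * ‖xh (t+s)‖)
            ≤ 1 * Bx := mul_le_mul (Real.exp_le_one_iff.2 (by nlinarith))
              (hBx' (t+s) h) (by positivity) zero_le_one
          _ ≤ max Bx Cx := by rw [one_mul]; exact le_max_left _ _
      · calc Real.exp ((γ/ε) * t) * ‖xh (t+s)‖
            ≤ 1 * Cx := mul_le_mul (Real.exp_le_one_iff.2 (by nlinarith))
              (hCx _ ⟨h, by linarith⟩) (norm_nonneg _) zero_le_one
          _ ≤ max Bx Cx := by rw [one_mul]; exact le_max_right _ _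
  · constructor
    · exact ContinuousOn.comp hcy ((continuous_id.add continuous_const).continuousOn)
        (fun t ht => by simp only [Set.mem_Iic] at ht ⊢; linarith)
    · refine ⟨max By Cy, ?_⟩
      rintro v ⟨⟨t, ht⟩, rfl⟩
      simp only [Set.mem_Iic] at ht
      show Real.exp (-(-γ/ε) * t) * ‖yh (t + s)‖ ≤ max By Cy
      rw [hw]
      rcases le_total (t + s) 0 with h | h
      · rw [show (γ/ε) * t = -((γ/ε) * s) + (γ/ε) * (t+s) by ring, Real.exp_add, mul_assoc]
        calc Real.exp (-((γ/ε) * s)) * (Real.exp ((γ/ε) * (t+s)) * ‖yh (t+s)‖)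
            ≤ 1 * By := mul_le_mul (Real.exp_le_one_iff.2 (by nlinarith))
              (hBy' (t+s) h) (by positivity) zero_le_one
          _ ≤ max By Cy := by rw [one_mul]; exact le_max_left _ _
      · calc Real.exp ((γ/ε) * t) * ‖yh (t+s)‖
            ≤ 1 * Cy := mul_le_mul (Real.exp_le_one_iff.2 (by nlinarith))
              (hCy _ ⟨h, by linarith⟩) (norm_nonneg _) zero_le_one
          _ ≤ max By Cy := by rw [one_mul]; exact le_max_right _ _
  · intro t ht
    have hts : t + s ≤ T := by linarith
    have htss : t + s ≤ s := by linarith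
    constructor
    · -- slow component
      have hvx := (hvoc (t+s) s htss hsT).1
      have hint := hII1 (t+s) s s htss hsT
      have e1 : NormedSpace.exp (t • S) (xh s) = xh (t+s) +
          ∫ r in (t+s)..s, NormedSpace.exp ((t + s - r) • S) (g1 r (xh r) (yh r)) := by
        rw [hvx, map_add]
        congr 1
        · rw [exp_comp_apply, show t + (s - (t+s)) = 0 by ring, zero_smul, NormedSpace.exp_zero,
            ContinuousLinearMap.one_apply]
        · rw [← ContinuousLinearMap.intervalIntegral_comp_comm _ hint]
          apply intervalIntegral.integral_congr
          intro r _
          show NormedSpace.exp (t • S) (NormedSpace.exp ((s - r) • S) (g1 r (xh r) (yh r))) =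
            NormedSpace.exp ((t + s - r) • S) (g1 r (xh r) (yh r))
          rw [exp_comp_apply, show t + (s - r) = t + s - r by ring]
      have e3 : (∫ σ in (0:ℝ)..t, NormedSpace.exp ((t - σ) • S)
          (g1 (σ+s) (xh (σ+s)) (yh (σ+s)))) =
          ∫ r in (0+s)..(t+s), NormedSpace.exp ((t + s - r) • S) (g1 r (xh r) (yh r)) := by
        rw [← intervalIntegral.integral_comp_add_right
          (fun r => NormedSpace.exp ((t + s - r) • S) (g1 r (xh r) (yh r))) s]
        apply intervalIntegral.integral_congr
        intro σ _
        show NormedSpace.exp ((t - σ) • S) (g1 (σ+s) (xh (σ+s)) (yh (σ+s))) =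
          NormedSpace.exp ((t + s - (σ+s)) • S) (g1 (σ+s) (xh (σ+s)) (yh (σ+s)))
        rw [show t + s - (σ + s) = t - σ by ring]
      rw [zero_add] at e3
      show xh (t + s) = NormedSpace.exp (t • S) (xh s) + ∫ σ in (0:ℝ)..t,
        NormedSpace.exp ((t - σ) • S) (g1 (σ+s) (xh (σ+s)) (yh (σ+s)))
      rw [e3, e1, intervalIntegral.integral_symm (t+s) s]
      abel
    · -- fast component
      have hrepts := hrep (t+s) hts
      show yh (t + s) = (1/ε) • ∫ r in Set.Iic t,
        NormedSpace.exp (((t - r)/ε) • F) (g2 (r+s) (xh (r+s)) (yh (r+s)))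
      rw [hrepts]
      congr 1
      have hpre : ((fun x : ℝ => x + s) ⁻¹' Set.Iic (t+s) : Set ℝ) = Set.Iic t := by
        ext x; simp
      have hmp := (measurePreserving_add_right (volume : Measure ℝ) s).setIntegral_preimage_emb
        (measurableEmbedding_addRight s)
        (fun r => NormedSpace.exp (((t + s - r)/ε) • F) (g2 r (xh r) (yh r))) (Set.Iic (t+s))
      rw [hpre] at hmp
      rw [← hmp]
      have heq : (fun x : ℝ => NormedSpace.exp (((t + s - (x+s))/ε) • F)
          (g2 (x+s) (xh (x+s)) (yh (x+s)))) =
          (fun x : ℝ => NormedSpace.exp (((t - x)/ε) • F) (g2 (x+s) (xh (x+s)) (yh (x+s)))) := by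
        funext x; rw [show t + s - (x+s) = t - x by ring]
      rw [heq]
end
end

section
/- Assume ρ(ε) < 1. Let Δĝ₁ : ℝ × E₁ × E₂ → E₁ and Δĝ₂ : ℝ × E₁ × E₂ → E₂ be functions with t ↦ Δĝᵢ(t,u,v) measurable for each (u,v), ‖Δĝᵢ(t,u₁,v₁) − Δĝᵢ(t,u₂,v₂)‖ ≤ K(‖u₁−u₂‖+‖v₁−v₂‖) for all t, and Δĝᵢ(t,0,0) = 0 for all t. Let h : E₁ → E₂ be Lipschitz with constant at most L_h := (−K/(γ+γ_f))·(1/(1−ρ(ε))), let (x₀, y₀) ∈ E₁ × E₂, and define the operator J^ε on C_β^+(E₁ × E₂) by J^ε(u,v)[t] := ( −∫_t^{+∞} exp((t−s)S) Δĝ₁(s, u(s), v(s)) ds , exp((t/ε)F)·v₀(u,v) + (1/ε)∫₀^t exp(((t−s)/ε)F) Δĝ₂(s, u(s), v(s)) ds ), where v₀(u,v) := −y₀ + h( x₀ − ∫_0^{+∞} exp(−sS) Δĝ₁(s, u(s), v(s)) ds ). Then for all ψ, ψ̄ ∈ C_β^+(E₁ × E₂), ‖J^ε(ψ) − J^ε(ψ̄)‖_{C_β^+}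 ≤ ρ̄(ε)·‖ψ − ψ̄‖_{C_β^+}, where ρ̄(ε) := ρ(ε) − εK²/((γ+εγ_s)(γ+γ_f)(1−ρ(ε))). -/
open MeasureTheory Real Filter

noncomputable section

variable {E₁ E₂ : Type*}
  [NormedAddCommGroup E₁] [NormedSpace ℝ E₁]
  [NormedAddCommGroup E₂] [NormedSpace ℝ E₂]

/-- Slow component of the Lyapunov–Perron operator `J^ε` for the tracking problem. -/
def Jslow (S : E₁ →L[ℝ] E₁) (Δg1 : ℝ → E₁ → E₂ → E₁)
    (u : ℝ → E₁) (v : ℝ → E₂) (t : ℝ) : E₁ :=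
  -∫ s in Set.Ici t, NormedSpace.exp ((t - s) • S) (Δg1 s (u s) (v s))

/-- The initial fast value `v₀(u,v)` in the tracking operator `J^ε`. -/
def Vzero (S : E₁ →L[ℝ] E₁) (Δg1 : ℝ → E₁ → E₂ → E₁) (h : E₁ → E₂)
    (x0 : E₁) (y0 : E₂) (u : ℝ → E₁) (v : ℝ → E₂) : E₂ :=
  -y0 + h (x0 - ∫ s in Set.Ici (0:ℝ), NormedSpace.exp ((-s) • S) (Δg1 s (u s) (v s)))

/-- Fast component of the Lyapunov–Perron operator `J^ε` for the tracking problem. -/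
def Jfast (S : E₁ →L[ℝ] E₁) (F : E₂ →L[ℝ] E₂)
    (Δg1 : ℝ → E₁ → E₂ → E₁) (Δg2 : ℝ → E₁ → E₂ → E₂) (h : E₁ → E₂)
    (x0 : E₁) (y0 : E₂) (ε : ℝ) (u : ℝ → E₁) (v : ℝ → E₂) (t : ℝ) : E₂ :=
  NormedSpace.exp ((t/ε) • F) (Vzero S Δg1 h x0 y0 u v) +
    (1/ε) • ∫ s in (0:ℝ)..t, NormedSpace.exp (((t - s)/ε) • F) (Δg2 s (u s) (v s))


section Helpers

open MeasureTheory Real Filter Topology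

lemma integrableOn_exp_mul_Ioi' {c : ℝ} (hc : c < 0) (a : ℝ) :
    MeasureTheory.IntegrableOn (fun s => Real.exp (c * s)) (Set.Ioi a) := by
  have := exp_neg_integrableOn_Ioi a (b := -c) (by linarith)
  simpa using this

lemma integral_exp_mul_Ioi' {c : ℝ} (hc : c < 0) (a : ℝ) :
    ∫ s in Set.Ioi a, Real.exp (c * s) = -(Real.exp (c * a) / c) := by
  have hd : ∀ x ∈ Set.Ici a, HasDerivAt (fun s => Real.exp (c * s) / c) (Real.exp (c * x)) x := by
    intro x _
    have h1 : HasDerivAt (fun s : ℝ => c * s) c x := by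
      simpa using (hasDerivAt_id x).const_mul c
    have h2 := h1.exp.div_const c
    rw [mul_div_cancel_right₀ _ hc.ne] at h2
    exact h2
  have htend : Tendsto (fun s => Real.exp (c * s) / c) atTop (𝓝 0) := by
    have h0 : Tendsto (fun s : ℝ => c * s) atTop atBot :=
      (tendsto_const_mul_atBot_of_neg hc).mpr tendsto_id
    have := (Real.tendsto_exp_atBot.comp h0).div_const c
    simpa using this
  have := MeasureTheory.integral_Ioi_of_hasDerivAt_of_tendsto'
    hd (integrableOn_exp_mul_Ioi' hc a) htend
  rw [this]; ring

lemma integral_exp_mul_interval {c : ℝ} (hc : c ≠ 0) (t : ℝ) :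
    ∫ s in (0:ℝ)..t, Real.exp (c * s) = (Real.exp (c * t) - 1) / c := by
  have hd : ∀ x ∈ Set.uIcc (0:ℝ) t,
      HasDerivAt (fun s => Real.exp (c * s) / c) (Real.exp (c * x)) x := by
    intro x _
    have h1 : HasDerivAt (fun s : ℝ => c * s) c x := by
      simpa using (hasDerivAt_id x).const_mul c
    have h2 := h1.exp.div_const c
    rw [mul_div_cancel_right₀ _ hc] at h2
    exact h2
  have hcont : Continuous fun s : ℝ => Real.exp (c * s) := by continuity
  rw [intervalIntegral.integral_eq_sub_of_hasDerivAt hd (hcont.intervalIntegrable 0 t)]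
  rw [mul_zero, Real.exp_zero]
  ring

lemma integrableOn_CExp {c : ℝ} (hc : c < 0) (C d a : ℝ) :
    MeasureTheory.IntegrableOn (fun s => C * Real.exp (d + c * s)) (Set.Ici a) := by
  simp_rw [Real.exp_add, ← mul_assoc]
  exact ((integrableOn_Ici_iff_integrableOn_Ioi).mpr (integrableOn_exp_mul_Ioi' hc a)).const_mul _

lemma integral_CExp {c : ℝ} (hc : c < 0) (C d a : ℝ) :
    ∫ s in Set.Ici a, C * Real.exp (d + c * s) = C * Real.exp (d + c * a) / (-c) := by
  simp_rw [Real.exp_add, ← mul_assoc]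
  rw [MeasureTheory.integral_Ici_eq_integral_Ioi, MeasureTheory.integral_const_mul,
    integral_exp_mul_Ioi' hc a]
  field_simp

lemma integral_CExp_interval {c : ℝ} (hc : c ≠ 0) (C d t : ℝ) :
    ∫ s in (0:ℝ)..t, C * Real.exp (d + c * s) =
      C * Real.exp d * ((Real.exp (c * t) - 1) / c) := by
  simp_rw [Real.exp_add, ← mul_assoc]
  rw [intervalIntegral.integral_const_mul, integral_exp_mul_interval hc]

lemma aesm_comp {E₁ E₂ E₃ : Type*}
    [NormedAddCommGroup E₁] [MeasurableSpace E₁] [BorelSpace E₁] [SecondCountableTopology E₁]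
    [NormedAddCommGroup E₂] [MeasurableSpace E₂] [BorelSpace E₂] [SecondCountableTopology E₂]
    [NormedAddCommGroup E₃] [MeasurableSpace E₃] [BorelSpace E₃] [SecondCountableTopology E₃]
    {K : ℝ} (hK : 0 ≤ K)
    (Δg : ℝ → E₁ → E₂ → E₃)
    (hm : ∀ u v, Measurable fun t => Δg t u v)
    (hl : ∀ t u₁ v₁ u₂ v₂, ‖Δg t u₁ v₁ - Δg t u₂ v₂‖ ≤ K * (‖u₁ - u₂‖ + ‖v₁ - v₂‖))
    {u : ℝ → E₁} {v : ℝ → E₂} {μ : MeasureTheory.Measure ℝ}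
    (hu : AEMeasurable u μ) (hv : AEMeasurable v μ) :
    AEStronglyMeasurable (fun s => Δg s (u s) (v s)) μ := by
  have hG : Measurable (Function.uncurry fun (p : E₁ × E₂) (t : ℝ) => Δg t p.1 p.2) := by
    apply measurable_uncurry_of_continuous_of_measurable
    · intro t
      have hlip : LipschitzWith (Real.toNNReal (2 * K)) (fun p : E₁ × E₂ => Δg t p.1 p.2) := by
        apply LipschitzWith.of_dist_le_mul
        intro p q
        rw [dist_eq_norm, Prod.dist_eq]
        have h1 := hl t p.1 p.2 q.1 q.2
        have h2 : ‖p.1 - q.1‖ ≤ dist p q := by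
          rw [Prod.dist_eq, ← dist_eq_norm]; exact le_max_left _ _
        have h3 : ‖p.2 - q.2‖ ≤ dist p q := by
          rw [Prod.dist_eq, ← dist_eq_norm]; exact le_max_right _ _
        have hd : (0:ℝ) ≤ dist p q := dist_nonneg
        have hc : ((Real.toNNReal (2 * K) : NNReal) : ℝ) = 2 * K :=
          Real.coe_toNNReal _ (by linarith)
        rw [← Prod.dist_eq, hc]
        nlinarith [dist_nonneg (x := p.1) (y := q.1), dist_nonneg (x := p.2) (y := q.2)]
      exact hlip.continuous
    · intro p; exact hm p.1 p.2
  have hp : AEMeasurable (fun s => ((u s, v s), s)) μ :=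
    (hu.prodMk hv).prodMk aemeasurable_id
  exact (hG.comp_aemeasurable hp).aestronglyMeasurable

lemma le_posNorm_aux {E : Type*} [NormedAddCommGroup E] {β : ℝ} {φ : ℝ → E}
    (hb : BddAbove (Set.range fun t : Set.Ici (0:ℝ) => Real.exp (-β * t.1) * ‖φ t.1‖))
    {t : ℝ} (ht : 0 ≤ t) : ‖φ t‖ ≤ Real.exp (β * t) * posNorm β φ := by
  have h1 : Real.exp (-β * t) * ‖φ t‖ ≤ posNorm β φ :=
    le_ciSup hb (⟨t, ht⟩ : Set.Ici (0:ℝ))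
  calc ‖φ t‖ = Real.exp (β * t) * (Real.exp (-β * t) * ‖φ t‖) := by
        rw [← mul_assoc, ← Real.exp_add, show β * t + -β * t = 0 by ring,
          Real.exp_zero, one_mul]
    _ ≤ Real.exp (β * t) * posNorm β φ :=
        mul_le_mul_of_nonneg_left h1 (Real.exp_pos _).le

lemma posNorm_nonneg_aux {E : Type*} [NormedAddCommGroup E] {β : ℝ} {φ : ℝ → E}
    (hb : BddAbove (Set.range fun t : Set.Ici (0:ℝ) => Real.exp (-β * t.1) * ‖φ t.1‖)) :
    0 ≤ posNorm β φ :=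
  le_trans (by positivity) (le_ciSup hb (⟨0, Set.self_mem_Ici⟩ : Set.Ici (0:ℝ)))

lemma bddAbove_sub_aux {E : Type*} [NormedAddCommGroup E] {β : ℝ} {φ ψ : ℝ → E}
    (hφ : BddAbove (Set.range fun t : Set.Ici (0:ℝ) => Real.exp (-β * t.1) * ‖φ t.1‖))
    (hψ : BddAbove (Set.range fun t : Set.Ici (0:ℝ) => Real.exp (-β * t.1) * ‖ψ t.1‖)) :
    BddAbove (Set.range fun t : Set.Ici (0:ℝ) =>
      Real.exp (-β * t.1) * ‖φ t.1 - ψ t.1‖) := by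
  obtain ⟨M1, hM1⟩ := hφ
  obtain ⟨M2, hM2⟩ := hψ
  refine ⟨M1 + M2, ?_⟩
  rintro x ⟨t, rfl⟩
  have h1 := hM1 (Set.mem_range_self t)
  have h2 := hM2 (Set.mem_range_self t)
  have h3 : Real.exp (-β * t.1) * ‖φ t.1 - ψ t.1‖ ≤
      Real.exp (-β * t.1) * (‖φ t.1‖ + ‖ψ t.1‖) :=
    mul_le_mul_of_nonneg_left (norm_sub_le _ _) (Real.exp_pos _).le
  simp only [mul_add] at h3
  simp only []
  linarith

lemma norm_bound_aux_s7 {E₁ E₂ E₃ : Type*} [NormedAddCommGroup E₁] [NormedAddCommGroup E₂]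
    [NormedAddCommGroup E₃]
    {K : ℝ} (hK : 0 ≤ K) (Δg : ℝ → E₁ → E₂ → E₃)
    (hl : ∀ t u₁ v₁ u₂ v₂, ‖Δg t u₁ v₁ - Δg t u₂ v₂‖ ≤ K * (‖u₁ - u₂‖ + ‖v₁ - v₂‖))
    (h0 : ∀ t, Δg t 0 0 = 0) {u : ℝ → E₁} {v : ℝ → E₂} {β : ℝ}
    (hbu : BddAbove (Set.range fun t : Set.Ici (0:ℝ) => Real.exp (-β * t.1) * ‖u t.1‖))
    (hbv : BddAbove (Set.range fun t : Set.Ici (0:ℝ) => Real.exp (-β * t.1) * ‖v t.1‖))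
    {s : ℝ} (hs : 0 ≤ s) :
    ‖Δg s (u s) (v s)‖ ≤ K * ((posNorm β u + posNorm β v) * Real.exp (β * s)) := by
  have h1 := hl s (u s) (v s) 0 0
  rw [h0 s, sub_zero] at h1
  simp only [sub_zero] at h1
  have h2 := le_posNorm_aux hbu hs
  have h3 := le_posNorm_aux hbv hs
  calc ‖Δg s (u s) (v s)‖ ≤ K * (‖u s‖ + ‖v s‖) := h1
    _ ≤ K * (Real.exp (β * s) * posNorm β u + Real.exp (β * s) * posNorm β v) :=
        mul_le_mul_of_nonneg_left (add_le_add h2 h3) hK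
    _ = K * ((posNorm β u + posNorm β v) * Real.exp (β * s)) := by ring

lemma norm_bound_sub_aux {E₁ E₂ E₃ : Type*} [NormedAddCommGroup E₁] [NormedAddCommGroup E₂]
    [NormedAddCommGroup E₃]
    {K : ℝ} (hK : 0 ≤ K) (Δg : ℝ → E₁ → E₂ → E₃)
    (hl : ∀ t u₁ v₁ u₂ v₂, ‖Δg t u₁ v₁ - Δg t u₂ v₂‖ ≤ K * (‖u₁ - u₂‖ + ‖v₁ - v₂‖))
    {u ub : ℝ → E₁} {v vb : ℝ → E₂} {β : ℝ}
    (hbu : BddAbove (Set.range fun t : Set.Ici (0:ℝ) =>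
      Real.exp (-β * t.1) * ‖u t.1 - ub t.1‖))
    (hbv : BddAbove (Set.range fun t : Set.Ici (0:ℝ) =>
      Real.exp (-β * t.1) * ‖v t.1 - vb t.1‖))
    {s : ℝ} (hs : 0 ≤ s) :
    ‖Δg s (u s) (v s) - Δg s (ub s) (vb s)‖ ≤
      K * ((posNorm β (fun r => u r - ub r) + posNorm β (fun r => v r - vb r)) *
        Real.exp (β * s)) := by
  have h1 := hl s (u s) (v s) (ub s) (vb s)
  have h2 := le_posNorm_aux (φ := fun r => u r - ub r) hbu hs
  have h3 := le_posNorm_aux (φ := fun r => v r - vb r) hbv hs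
  calc ‖Δg s (u s) (v s) - Δg s (ub s) (vb s)‖
      ≤ K * (‖u s - ub s‖ + ‖v s - vb s‖) := h1
    _ ≤ K * (Real.exp (β * s) * posNorm β (fun r => u r - ub r) +
        Real.exp (β * s) * posNorm β (fun r => v r - vb r)) :=
        mul_le_mul_of_nonneg_left (add_le_add h2 h3) hK
    _ = _ := by ring

end Helpers

set_option maxHeartbeats 1000000 in
/-- The tracking Lyapunov–Perron operator `J^ε` is `ρ̄(ε)`-Lipschitz
on `C_β^+`. -/
theorem tracking_operator_contraction
    {E₁ E₂ : Type*}
    [NormedAddCommGroup E₁] [NormedSpace ℝ E₁] [FiniteDimensional ℝ E₁] [MeasurableSpace E₁] [BorelSpace E₁]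
    [NormedAddCommGroup E₂] [NormedSpace ℝ E₂] [FiniteDimensional ℝ E₂] [MeasurableSpace E₂] [BorelSpace E₂]
    (S : E₁ →L[ℝ] E₁) (F : E₂ →L[ℝ] E₂)
    (γs γf γ K ε : ℝ)
    (hγs : 0 < γs) (hγf : γf < 0) (hγ : 0 < γ) (hK : 0 < K)
    (hgap : K < -(γ + γf)) (hε : 0 < ε)
    (hS : ∀ t ≤ (0:ℝ), ∀ x : E₁, ‖NormedSpace.exp (t • S) x‖ ≤ Real.exp (γs * t) * ‖x‖)
    (hF : ∀ t ≥ (0:ℝ), ∀ y : E₂, ‖NormedSpace.exp (t • F) y‖ ≤ Real.exp (γf * t) * ‖y‖)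
    (hρ : (ε * K / (γ + ε * γs) - K / (γ + γf)) < 1)
    (Δg1 : ℝ → E₁ → E₂ → E₁) (Δg2 : ℝ → E₁ → E₂ → E₂)
    (hm1 : ∀ u v, Measurable fun t => Δg1 t u v)
    (hm2 : ∀ u v, Measurable fun t => Δg2 t u v)
    (hl1 : ∀ t u₁ v₁ u₂ v₂, ‖Δg1 t u₁ v₁ - Δg1 t u₂ v₂‖ ≤ K * (‖u₁ - u₂‖ + ‖v₁ - v₂‖))
    (hl2 : ∀ t u₁ v₁ u₂ v₂, ‖Δg2 t u₁ v₁ - Δg2 t u₂ v₂‖ ≤ K * (‖u₁ - u₂‖ + ‖v₁ - v₂‖))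
    (h01 : ∀ t, Δg1 t 0 0 = 0) (h02 : ∀ t, Δg2 t 0 0 = 0)
    (h : E₁ → E₂)
    (hhl : ∀ a b : E₁,
      ‖h a - h b‖ ≤ (-K / (γ + γf)) * (1 / (1 - (ε * K / (γ + ε * γs) - K / (γ + γf)))) * ‖a - b‖)
    (x0 : E₁) (y0 : E₂) :
    ∀ (u : ℝ → E₁) (v : ℝ → E₂) (ub : ℝ → E₁) (vb : ℝ → E₂),
      MemCpos (-γ/ε) u → MemCpos (-γ/ε) v → MemCpos (-γ/ε) ub → MemCpos (-γ/ε) vb →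
      posNorm (-γ/ε) (fun t => Jslow S Δg1 u v t - Jslow S Δg1 ub vb t) +
        posNorm (-γ/ε) (fun t =>
          Jfast S F Δg1 Δg2 h x0 y0 ε u v t - Jfast S F Δg1 Δg2 h x0 y0 ε ub vb t) ≤
      ((ε * K / (γ + ε * γs) - K / (γ + γf)) - ε * K ^ 2 / ((γ + ε * γs) * (γ + γf) * (1 - (ε * K / (γ + ε * γs) - K / (γ + γf))))) *
        (posNorm (-γ/ε) (fun t => u t - ub t) + posNorm (-γ/ε) (fun t => v t - vb t)) := by
  intro u v ub vb hu hv hub hvb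
  obtain ⟨huc, hub1⟩ := hu
  obtain ⟨hvc, hvb1⟩ := hv
  obtain ⟨hubc, hubb1⟩ := hub
  obtain ⟨hvbc, hvbb1⟩ := hvb
  haveI : Nonempty (Set.Ici (0:ℝ)) := ⟨⟨0, Set.self_mem_Ici⟩⟩
  have hεne : ε ≠ 0 := ne_of_gt hε
  have hγγf : γ + γf < 0 := by linarith
  have hγγfne : γ + γf ≠ 0 := ne_of_lt hγγf
  have hgs : 0 < γ + ε * γs := by nlinarith
  have hgsne : (γ + ε * γs) ≠ 0 := ne_of_gt hgs
  have h1ρ : 0 < 1 - (ε * K / (γ + ε * γs) - K / (γ + γf)) := by linarith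
  have h1ρne : 1 - (ε * K / (γ + ε * γs) - K / (γ + γf)) ≠ 0 := ne_of_gt h1ρ
  have hc2nn : 0 ≤ -K / (γ + γf) := by
    rw [div_nonneg_iff]; right; exact ⟨by linarith, hγγf.le⟩
  have hLh0 : 0 ≤ (-K / (γ + γf)) * (1 / (1 - (ε * K / (γ + ε * γs) - K / (γ + γf)))) := by
    exact mul_nonneg hc2nn (one_div_pos.mpr h1ρ).le
  set Nu := posNorm (-γ/ε) (fun t => u t - ub t) with hNudef
  set Nv := posNorm (-γ/ε) (fun t => v t - vb t) with hNvdef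
  have hbu := bddAbove_sub_aux (β := -γ/ε) hub1 hubb1
  have hbv := bddAbove_sub_aux (β := -γ/ε) hvb1 hvbb1
  have hNu0 : 0 ≤ Nu := posNorm_nonneg_aux hbu
  have hNv0 : 0 ≤ Nv := posNorm_nonneg_aux hbv
  have hN0 : 0 ≤ Nu + Nv := by linarith
  have hcneg : -γ/ε - γs < 0 := by
    have h1 : -γ/ε < 0 := div_neg_of_neg_of_pos (by linarith) hε
    linarith
  -- the key estimate on the slow integrals
  have slow_est : ∀ t : ℝ, 0 ≤ t →
      ‖(∫ s in Set.Ici t, NormedSpace.exp ((t - s) • S) (Δg1 s (u s) (v s))) -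
        ∫ s in Set.Ici t, NormedSpace.exp ((t - s) • S) (Δg1 s (ub s) (vb s))‖ ≤
      ε * K / (γ + ε * γs) * ((Nu + Nv) * Real.exp (-γ/ε * t)) := by
    intro t ht
    have hsub : Set.Ici t ⊆ Set.Ici (0:ℝ) := Set.Ici_subset_Ici.mpr ht
    have hAc : Continuous fun s : ℝ => NormedSpace.exp ((t - s) • S) :=
      (continuous_iff_continuousAt.mpr fun x => (NormedSpace.exp_analytic (𝕂 := ℝ) x).continuousAt).comp
        ((continuous_const.sub continuous_id).smul continuous_const)
    have hw : AEStronglyMeasurable (fun s => Δg1 s (u s) (v s))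
        (volume.restrict (Set.Ici t)) :=
      aesm_comp hK.le Δg1 hm1 hl1 (((huc.mono hsub)).aemeasurable measurableSet_Ici)
        (((hvc.mono hsub)).aemeasurable measurableSet_Ici)
    have hwb : AEStronglyMeasurable (fun s => Δg1 s (ub s) (vb s))
        (volume.restrict (Set.Ici t)) :=
      aesm_comp hK.le Δg1 hm1 hl1 (((hubc.mono hsub)).aemeasurable measurableSet_Ici)
        (((hvbc.mono hsub)).aemeasurable measurableSet_Ici)
    have hF1m : AEStronglyMeasurable
        (fun s => NormedSpace.exp ((t - s) • S) (Δg1 s (u s) (v s)))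
        (volume.restrict (Set.Ici t)) :=
      isBoundedBilinearMap_apply.continuous.comp_aestronglyMeasurable
        (hAc.aestronglyMeasurable.prodMk hw)
    have hF1mb : AEStronglyMeasurable
        (fun s => NormedSpace.exp ((t - s) • S) (Δg1 s (ub s) (vb s)))
        (volume.restrict (Set.Ici t)) :=
      isBoundedBilinearMap_apply.continuous.comp_aestronglyMeasurable
        (hAc.aestronglyMeasurable.prodMk hwb)
    have hI1 : IntegrableOn
        (fun s => NormedSpace.exp ((t - s) • S) (Δg1 s (u s) (v s))) (Set.Ici t) := by
      apply Integrable.mono'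
        (integrableOn_CExp hcneg (K * (posNorm (-γ/ε) u + posNorm (-γ/ε) v)) (γs * t) t) hF1m
      filter_upwards [ae_restrict_mem measurableSet_Ici] with s hs
      have hst : t ≤ s := hs
      have h0s : 0 ≤ s := le_trans ht hst
      have h1 := hS (t - s) (by linarith) (Δg1 s (u s) (v s))
      have h2 := norm_bound_aux_s7 hK.le Δg1 hl1 h01 hub1 hvb1 h0s
      calc ‖NormedSpace.exp ((t - s) • S) (Δg1 s (u s) (v s))‖
          ≤ Real.exp (γs * (t - s)) *
            (K * ((posNorm (-γ/ε) u + posNorm (-γ/ε) v) * Real.exp (-γ/ε * s))) :=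
            le_trans h1 (mul_le_mul_of_nonneg_left h2 (Real.exp_pos _).le)
        _ = K * (posNorm (-γ/ε) u + posNorm (-γ/ε) v) *
            (Real.exp (γs * (t - s)) * Real.exp (-γ/ε * s)) := by ring
        _ = K * (posNorm (-γ/ε) u + posNorm (-γ/ε) v) *
            Real.exp (γs * t + (-γ/ε - γs) * s) := by
            rw [← Real.exp_add]; congr 1; ring
    have hI1b : IntegrableOn
        (fun s => NormedSpace.exp ((t - s) • S) (Δg1 s (ub s) (vb s))) (Set.Ici t) := by
      apply Integrable.mono'
        (integrableOn_CExp hcneg (K * (posNorm (-γ/ε) ub + posNorm (-γ/ε) vb)) (γs * t) t) hF1mb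
      filter_upwards [ae_restrict_mem measurableSet_Ici] with s hs
      have hst : t ≤ s := hs
      have h0s : 0 ≤ s := le_trans ht hst
      have h1 := hS (t - s) (by linarith) (Δg1 s (ub s) (vb s))
      have h2 := norm_bound_aux_s7 hK.le Δg1 hl1 h01 hubb1 hvbb1 h0s
      calc ‖NormedSpace.exp ((t - s) • S) (Δg1 s (ub s) (vb s))‖
          ≤ Real.exp (γs * (t - s)) *
            (K * ((posNorm (-γ/ε) ub + posNorm (-γ/ε) vb) * Real.exp (-γ/ε * s))) :=
            le_trans h1 (mul_le_mul_of_nonneg_left h2 (Real.exp_pos _).le)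
        _ = K * (posNorm (-γ/ε) ub + posNorm (-γ/ε) vb) *
            (Real.exp (γs * (t - s)) * Real.exp (-γ/ε * s)) := by ring
        _ = K * (posNorm (-γ/ε) ub + posNorm (-γ/ε) vb) *
            Real.exp (γs * t + (-γ/ε - γs) * s) := by
            rw [← Real.exp_add]; congr 1; ring
    rw [← MeasureTheory.integral_sub hI1 hI1b]
    have hbd : ∀ᵐ s ∂(volume.restrict (Set.Ici t)),
        ‖NormedSpace.exp ((t - s) • S) (Δg1 s (u s) (v s)) -
          NormedSpace.exp ((t - s) • S) (Δg1 s (ub s) (vb s))‖ ≤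
        K * (Nu + Nv) * Real.exp (γs * t + (-γ/ε - γs) * s) := by
      filter_upwards [ae_restrict_mem measurableSet_Ici] with s hs
      have hst : t ≤ s := hs
      have h0s : 0 ≤ s := le_trans ht hst
      rw [← map_sub]
      have h1 := hS (t - s) (by linarith) (Δg1 s (u s) (v s) - Δg1 s (ub s) (vb s))
      have h2 := norm_bound_sub_aux hK.le Δg1 hl1 hbu hbv h0s
      rw [← hNudef, ← hNvdef] at h2
      calc ‖NormedSpace.exp ((t - s) • S)
            (Δg1 s (u s) (v s) - Δg1 s (ub s) (vb s))‖
          ≤ Real.exp (γs * (t - s)) * (K * ((Nu + Nv) * Real.exp (-γ/ε * s))) :=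
            le_trans h1 (mul_le_mul_of_nonneg_left h2 (Real.exp_pos _).le)
        _ = K * (Nu + Nv) * (Real.exp (γs * (t - s)) * Real.exp (-γ/ε * s)) := by ring
        _ = K * (Nu + Nv) * Real.exp (γs * t + (-γ/ε - γs) * s) := by
            rw [← Real.exp_add]; congr 1; ring
    refine le_trans
      (MeasureTheory.norm_integral_le_of_norm_le
        (integrableOn_CExp hcneg (K * (Nu + Nv)) (γs * t) t) hbd) (le_of_eq ?_)
    rw [integral_CExp hcneg]
    rw [show γs * t + (-γ/ε - γs) * t = -γ/ε * t by ring]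
    have hne' : -γ - ε * γs ≠ 0 := by intro hh; apply hgsne; linarith
    field_simp
    ring
  -- bound on the difference of the initial fast values
  have hVdiff : ‖Vzero S Δg1 h x0 y0 u v - Vzero S Δg1 h x0 y0 ub vb‖ ≤
      (-K / (γ + γf)) * (1 / (1 - (ε * K / (γ + ε * γs) - K / (γ + γf)))) *
        (ε * K / (γ + ε * γs) * (Nu + Nv)) := by
    simp only [Vzero]
    set Iu := ∫ s in Set.Ici (0:ℝ), NormedSpace.exp ((-s) • S) (Δg1 s (u s) (v s))
      with hIu
    set Ib := ∫ s in Set.Ici (0:ℝ), NormedSpace.exp ((-s) • S) (Δg1 s (ub s) (vb s))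
      with hIb
    have e1 : (-y0 + h (x0 - Iu)) - (-y0 + h (x0 - Ib)) = h (x0 - Iu) - h (x0 - Ib) := by
      abel
    rw [e1]
    have h2 := hhl (x0 - Iu) (x0 - Ib)
    have e2 : (x0 - Iu) - (x0 - Ib) = Ib - Iu := by abel
    rw [e2] at h2
    have h3 := slow_est 0 le_rfl
    simp only [zero_sub] at h3
    rw [show -γ/ε * (0:ℝ) = 0 by ring, Real.exp_zero, mul_one] at h3
    rw [← hIu, ← hIb] at h3
    rw [norm_sub_rev] at h3
    calc ‖h (x0 - Iu) - h (x0 - Ib)‖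
        ≤ (-K / (γ + γf)) * (1 / (1 - (ε * K / (γ + ε * γs) - K / (γ + γf)))) *
          ‖Ib - Iu‖ := h2
      _ ≤ _ := mul_le_mul_of_nonneg_left h3 hLh0
  -- pointwise estimate for the fast component
  have fast_est : ∀ t : ℝ, 0 ≤ t →
      ‖Jfast S F Δg1 Δg2 h x0 y0 ε u v t - Jfast S F Δg1 Δg2 h x0 y0 ε ub vb t‖ ≤
      ((-K / (γ + γf)) * (1 / (1 - (ε * K / (γ + ε * γs) - K / (γ + γf)))) *
          (ε * K / (γ + ε * γs)) + -K / (γ + γf)) * ((Nu + Nv) * Real.exp (-γ/ε * t)) := by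
    intro t ht
    simp only [Jfast]
    have e0 : ∀ (A Ab c cb : E₂), (A + c) - (Ab + cb) = (A - Ab) + (c - cb) :=
      fun _ _ _ _ => by abel
    rw [e0]
    refine le_trans (norm_add_le _ _) ?_
    have hp1 : ‖NormedSpace.exp ((t/ε) • F) (Vzero S Δg1 h x0 y0 u v) -
        NormedSpace.exp ((t/ε) • F) (Vzero S Δg1 h x0 y0 ub vb)‖ ≤
        (-K / (γ + γf)) * (1 / (1 - (ε * K / (γ + ε * γs) - K / (γ + γf)))) *
          (ε * K / (γ + ε * γs)) * ((Nu + Nv) * Real.exp (-γ/ε * t)) := by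
      rw [← map_sub]
      refine le_trans (hF (t/ε) (div_nonneg ht hε.le) _) ?_
      have hexple : Real.exp (γf * (t/ε)) ≤ Real.exp (-γ/ε * t) := by
        apply Real.exp_le_exp.mpr
        have key : -γ/ε * t - γf * (t/ε) = (-(γ + γf)) * (t/ε) := by ring
        have hpos : 0 ≤ (-(γ + γf)) * (t/ε) :=
          mul_nonneg (by linarith) (div_nonneg ht hε.le)
        linarith
      calc Real.exp (γf * (t/ε)) *
            ‖Vzero S Δg1 h x0 y0 u v - Vzero S Δg1 h x0 y0 ub vb‖
          ≤ Real.exp (γf * (t/ε)) *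
            ((-K / (γ + γf)) * (1 / (1 - (ε * K / (γ + ε * γs) - K / (γ + γf)))) *
              (ε * K / (γ + ε * γs) * (Nu + Nv))) :=
            mul_le_mul_of_nonneg_left hVdiff (Real.exp_pos _).le
        _ ≤ Real.exp (-γ/ε * t) *
            ((-K / (γ + γf)) * (1 / (1 - (ε * K / (γ + ε * γs) - K / (γ + γf)))) *
              (ε * K / (γ + ε * γs) * (Nu + Nv))) := by
            apply mul_le_mul_of_nonneg_right hexple
            exact mul_nonneg hLh0 (mul_nonneg
              (div_nonneg (mul_nonneg hε.le hK.le) hgs.le) hN0)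
        _ = _ := by ring
    have hp2 : ‖(1/ε) • (∫ s in (0:ℝ)..t, NormedSpace.exp (((t - s)/ε) • F)
          (Δg2 s (u s) (v s))) -
        (1/ε) • (∫ s in (0:ℝ)..t, NormedSpace.exp (((t - s)/ε) • F)
          (Δg2 s (ub s) (vb s)))‖ ≤
        (-K / (γ + γf)) * ((Nu + Nv) * Real.exp (-γ/ε * t)) := by
      have hsub2 : Set.Ioc (0:ℝ) t ⊆ Set.Ici (0:ℝ) := fun x hx => le_of_lt hx.1
      have hAc2 : Continuous fun s : ℝ => NormedSpace.exp (((t - s)/ε) • F) :=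
        (continuous_iff_continuousAt.mpr fun x => (NormedSpace.exp_analytic (𝕂 := ℝ) x).continuousAt).comp
          (((continuous_const.sub continuous_id).div_const ε).smul continuous_const)
      have hw2 : AEStronglyMeasurable (fun s => Δg2 s (u s) (v s))
          (volume.restrict (Set.Ioc 0 t)) :=
        aesm_comp hK.le Δg2 hm2 hl2 ((huc.mono hsub2).aemeasurable measurableSet_Ioc)
          ((hvc.mono hsub2).aemeasurable measurableSet_Ioc)
      have hw2b : AEStronglyMeasurable (fun s => Δg2 s (ub s) (vb s))
          (volume.restrict (Set.Ioc 0 t)) :=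
        aesm_comp hK.le Δg2 hm2 hl2 ((hubc.mono hsub2).aemeasurable measurableSet_Ioc)
          ((hvbc.mono hsub2).aemeasurable measurableSet_Ioc)
      have hGm : AEStronglyMeasurable
          (fun s => NormedSpace.exp (((t - s)/ε) • F) (Δg2 s (u s) (v s)))
          (volume.restrict (Set.Ioc 0 t)) :=
        isBoundedBilinearMap_apply.continuous.comp_aestronglyMeasurable
          (hAc2.aestronglyMeasurable.prodMk hw2)
      have hGmb : AEStronglyMeasurable
          (fun s => NormedSpace.exp (((t - s)/ε) • F) (Δg2 s (ub s) (vb s)))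
          (volume.restrict (Set.Ioc 0 t)) :=
        isBoundedBilinearMap_apply.continuous.comp_aestronglyMeasurable
          (hAc2.aestronglyMeasurable.prodMk hw2b)
      have hexp1 : Continuous fun s : ℝ => Real.exp (γf * ((t - s)/ε)) :=
        Real.continuous_exp.comp
          (continuous_const.mul ((continuous_const.sub continuous_id).div_const ε))
      have hexp2 : Continuous fun s : ℝ => Real.exp (-γ/ε * s) :=
        Real.continuous_exp.comp (continuous_const.mul continuous_id)
      have hdomc : Continuous fun s : ℝ =>
          Real.exp (γf * ((t - s)/ε)) *
            (K * ((posNorm (-γ/ε) u + posNorm (-γ/ε) v) * Real.exp (-γ/ε * s))) :=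
        hexp1.mul (continuous_const.mul (continuous_const.mul hexp2))
      have hdomcb : Continuous fun s : ℝ =>
          Real.exp (γf * ((t - s)/ε)) *
            (K * ((posNorm (-γ/ε) ub + posNorm (-γ/ε) vb) * Real.exp (-γ/ε * s))) :=
        hexp1.mul (continuous_const.mul (continuous_const.mul hexp2))
      have hG : IntervalIntegrable
          (fun s => NormedSpace.exp (((t - s)/ε) • F) (Δg2 s (u s) (v s)))
          volume 0 t := by
        rw [intervalIntegrable_iff_integrableOn_Ioc_of_le ht]
        apply Integrable.mono' hdomc.integrableOn_Ioc hGm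
        filter_upwards [ae_restrict_mem measurableSet_Ioc] with s hs
        have h0s : 0 ≤ s := le_of_lt hs.1
        have h1 := hF ((t - s)/ε) (div_nonneg (by linarith [hs.2]) hε.le) (Δg2 s (u s) (v s))
        have h2 := norm_bound_aux_s7 hK.le Δg2 hl2 h02 hub1 hvb1 h0s
        exact le_trans h1 (mul_le_mul_of_nonneg_left h2 (Real.exp_pos _).le)
      have hGb : IntervalIntegrable
          (fun s => NormedSpace.exp (((t - s)/ε) • F) (Δg2 s (ub s) (vb s)))
          volume 0 t := by
        rw [intervalIntegrable_iff_integrableOn_Ioc_of_le ht]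
        apply Integrable.mono' hdomcb.integrableOn_Ioc hGmb
        filter_upwards [ae_restrict_mem measurableSet_Ioc] with s hs
        have h0s : 0 ≤ s := le_of_lt hs.1
        have h1 := hF ((t - s)/ε) (div_nonneg (by linarith [hs.2]) hε.le) (Δg2 s (ub s) (vb s))
        have h2 := norm_bound_aux_s7 hK.le Δg2 hl2 h02 hubb1 hvbb1 h0s
        exact le_trans h1 (mul_le_mul_of_nonneg_left h2 (Real.exp_pos _).le)
      rw [← smul_sub, norm_smul, ← intervalIntegral.integral_sub hG hGb]
      have hnorm1ε : ‖(1:ℝ)/ε‖ = 1/ε := by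
        rw [Real.norm_eq_abs, abs_of_pos (one_div_pos.mpr hε)]
      rw [hnorm1ε]
      have hcpos : 0 < (-γ - γf)/ε := by
        apply div_pos (by linarith) hε
      have hbd2 : ∀ᵐ s ∂(volume.restrict (Set.uIoc 0 t)),
          ‖NormedSpace.exp (((t - s)/ε) • F) (Δg2 s (u s) (v s)) -
            NormedSpace.exp (((t - s)/ε) • F) (Δg2 s (ub s) (vb s))‖ ≤
          K * (Nu + Nv) * Real.exp (γf * t/ε + ((-γ - γf)/ε) * s) := by
        rw [Set.uIoc_of_le ht]
        filter_upwards [ae_restrict_mem measurableSet_Ioc] with s hs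
        have h0s : 0 ≤ s := le_of_lt hs.1
        rw [← map_sub]
        have h1 := hF ((t - s)/ε) (div_nonneg (by linarith [hs.2]) hε.le)
          (Δg2 s (u s) (v s) - Δg2 s (ub s) (vb s))
        have h2 := norm_bound_sub_aux hK.le Δg2 hl2 hbu hbv h0s
        rw [← hNudef, ← hNvdef] at h2
        calc ‖NormedSpace.exp (((t - s)/ε) • F)
              (Δg2 s (u s) (v s) - Δg2 s (ub s) (vb s))‖
            ≤ Real.exp (γf * ((t - s)/ε)) * (K * ((Nu + Nv) * Real.exp (-γ/ε * s))) :=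
              le_trans h1 (mul_le_mul_of_nonneg_left h2 (Real.exp_pos _).le)
          _ = K * (Nu + Nv) *
              (Real.exp (γf * ((t - s)/ε)) * Real.exp (-γ/ε * s)) := by ring
          _ = K * (Nu + Nv) * Real.exp (γf * t/ε + ((-γ - γf)/ε) * s) := by
              rw [← Real.exp_add]; congr 1; ring
      have hdint : IntervalIntegrable
          (fun s => K * (Nu + Nv) * Real.exp (γf * t/ε + ((-γ - γf)/ε) * s)) volume 0 t :=
        (continuous_const.mul (Real.continuous_exp.comp
          (continuous_const.add (continuous_const.mul continuous_id)))).intervalIntegrable 0 t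
      refine le_trans (mul_le_mul_of_nonneg_left
        (intervalIntegral.norm_integral_le_abs_of_norm_le hbd2 hdint)
        (one_div_pos.mpr hε).le) ?_
      rw [integral_CExp_interval hcpos.ne']
      have habs : |K * (Nu + Nv) * Real.exp (γf * t/ε) *
          ((Real.exp (((-γ - γf)/ε) * t) - 1) / ((-γ - γf)/ε))| =
          K * (Nu + Nv) * Real.exp (γf * t/ε) *
          ((Real.exp (((-γ - γf)/ε) * t) - 1) / ((-γ - γf)/ε)) := by
        apply abs_of_nonneg
        apply mul_nonneg (mul_nonneg (mul_nonneg hK.le hN0) (Real.exp_pos _).le)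
        apply div_nonneg _ hcpos.le
        have : (1:ℝ) ≤ Real.exp (((-γ - γf)/ε) * t) :=
          Real.one_le_exp (mul_nonneg hcpos.le ht)
        linarith
      rw [habs]
      have hee : Real.exp (γf * t/ε) * Real.exp (((-γ - γf)/ε) * t) =
          Real.exp (-γ/ε * t) := by
        rw [← Real.exp_add]; congr 1; ring
      have step : 1/ε * (K * (Nu + Nv) * Real.exp (γf * t/ε) *
          ((Real.exp (((-γ - γf)/ε) * t) - 1) / ((-γ - γf)/ε))) ≤
          1/ε * (K * (Nu + Nv) * Real.exp (γf * t/ε) *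
          (Real.exp (((-γ - γf)/ε) * t) / ((-γ - γf)/ε))) := by
        apply mul_le_mul_of_nonneg_left _ (one_div_pos.mpr hε).le
        apply mul_le_mul_of_nonneg_left _
          (mul_nonneg (mul_nonneg hK.le hN0) (Real.exp_pos _).le)
        exact (div_le_div_iff_of_pos_right hcpos).mpr (sub_le_self _ zero_le_one)
      refine le_trans step (le_of_eq ?_)
      have hne2 : -γ - γf ≠ 0 := by intro hh; apply hγγfne; linarith
      rw [← hee]
      field_simp
      ring
    calc ‖NormedSpace.exp ((t/ε) • F) (Vzero S Δg1 h x0 y0 u v) -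
          NormedSpace.exp ((t/ε) • F) (Vzero S Δg1 h x0 y0 ub vb)‖ +
        ‖(1/ε) • (∫ s in (0:ℝ)..t, NormedSpace.exp (((t - s)/ε) • F)
            (Δg2 s (u s) (v s))) -
          (1/ε) • (∫ s in (0:ℝ)..t, NormedSpace.exp (((t - s)/ε) • F)
            (Δg2 s (ub s) (vb s)))‖
        ≤ (-K / (γ + γf)) * (1 / (1 - (ε * K / (γ + ε * γs) - K / (γ + γf)))) *
            (ε * K / (γ + ε * γs)) * ((Nu + Nv) * Real.exp (-γ/ε * t)) +
          (-K / (γ + γf)) * ((Nu + Nv) * Real.exp (-γ/ε * t)) := add_le_add hp1 hp2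
      _ = _ := by ring
  -- assembling the two weighted norms
  have hslow : posNorm (-γ/ε) (fun t => Jslow S Δg1 u v t - Jslow S Δg1 ub vb t) ≤
      ε * K / (γ + ε * γs) * (Nu + Nv) := by
    apply ciSup_le
    rintro ⟨t, ht⟩
    have h1 := slow_est t ht
    simp only [Jslow, neg_sub_neg]
    rw [norm_sub_rev]
    have hee : Real.exp (-(-γ/ε) * t) * Real.exp (-γ/ε * t) = 1 := by
      rw [← Real.exp_add, show -(-γ/ε) * t + -γ/ε * t = 0 by ring, Real.exp_zero]
    calc Real.exp (-(-γ/ε) * t) *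
          ‖(∫ s in Set.Ici t, NormedSpace.exp ((t - s) • S) (Δg1 s (u s) (v s))) -
            ∫ s in Set.Ici t, NormedSpace.exp ((t - s) • S) (Δg1 s (ub s) (vb s))‖
        ≤ Real.exp (-(-γ/ε) * t) *
          (ε * K / (γ + ε * γs) * ((Nu + Nv) * Real.exp (-γ/ε * t))) :=
          mul_le_mul_of_nonneg_left h1 (Real.exp_pos _).le
      _ = (Real.exp (-(-γ/ε) * t) * Real.exp (-γ/ε * t)) *
          (ε * K / (γ + ε * γs) * (Nu + Nv)) := by ring
      _ = ε * K / (γ + ε * γs) * (Nu + Nv) := by rw [hee, one_mul]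
  have hfast : posNorm (-γ/ε) (fun t =>
      Jfast S F Δg1 Δg2 h x0 y0 ε u v t - Jfast S F Δg1 Δg2 h x0 y0 ε ub vb t) ≤
      ((-K / (γ + γf)) * (1 / (1 - (ε * K / (γ + ε * γs) - K / (γ + γf)))) *
        (ε * K / (γ + ε * γs)) + -K / (γ + γf)) * (Nu + Nv) := by
    apply ciSup_le
    rintro ⟨t, ht⟩
    have h1 := fast_est t ht
    have hee : Real.exp (-(-γ/ε) * t) * Real.exp (-γ/ε * t) = 1 := by
      rw [← Real.exp_add, show -(-γ/ε) * t + -γ/ε * t = 0 by ring, Real.exp_zero]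
    calc Real.exp (-(-γ/ε) * t) *
          ‖Jfast S F Δg1 Δg2 h x0 y0 ε u v t - Jfast S F Δg1 Δg2 h x0 y0 ε ub vb t‖
        ≤ Real.exp (-(-γ/ε) * t) *
          (((-K / (γ + γf)) * (1 / (1 - (ε * K / (γ + ε * γs) - K / (γ + γf)))) *
            (ε * K / (γ + ε * γs)) + -K / (γ + γf)) * ((Nu + Nv) * Real.exp (-γ/ε * t))) :=
          mul_le_mul_of_nonneg_left h1 (Real.exp_pos _).le
      _ = (Real.exp (-(-γ/ε) * t) * Real.exp (-γ/ε * t)) *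
          (((-K / (γ + γf)) * (1 / (1 - (ε * K / (γ + ε * γs) - K / (γ + γf)))) *
            (ε * K / (γ + ε * γs)) + -K / (γ + γf)) * (Nu + Nv)) := by ring
      _ = _ := by rw [hee, one_mul]
  have hconst : ∀ D : ℝ, D ≠ 0 →
      ε * K / (γ + ε * γs) + ((-K / (γ + γf)) * (1 / D) * (ε * K / (γ + ε * γs)) +
        -K / (γ + γf)) =
      (ε * K / (γ + ε * γs) - K / (γ + γf)) -
        ε * K ^ 2 / ((γ + ε * γs) * (γ + γf) * D) := by
    intro D hD
    field_simp
    ring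
  have h4 := hconst _ h1ρne
  refine le_trans (add_le_add hslow hfast) (le_of_eq ?_)
  rw [← h4]
  ring
end
end

section
/- Assume moreover that ‖g₁(x,y)‖ ≤ C for all (x,y), for some constant C > 0, and that ρ(ε) < 1. Let (x̃^ε, ỹ^ε) ∈ C_{−γ}^−(E₁ × E₂) be the unique solution of the time-rescaled slow–fast integral system with initial slow value x₀. Then for all t ≤ 0, ‖x̃^ε(t) − x₀‖ ≤ C₁·(1 − e^{εγ_s t}), where C₁ := (‖Sx₀‖ + C)/γ_s. -/
open MeasureTheory Real Filter

noncomputable section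

variable {E₁ E₂ : Type*}
  [NormedAddCommGroup E₁] [NormedSpace ℝ E₁]
  [NormedAddCommGroup E₂] [NormedSpace ℝ E₂]

/-- Slow component of the time-rescaled slow–fast integral system. -/
def RSslow (S : E₁ →L[ℝ] E₁) (g1 : E₁ → E₂ → E₁) (σ ε : ℝ) (ξ : ℝ → E₂) (x0 : E₁)
    (x : ℝ → E₁) (y : ℝ → E₂) (t : ℝ) : E₁ :=
  NormedSpace.exp ((ε * t) • S) x0 +
    ε • ∫ s in (0:ℝ)..t, NormedSpace.exp ((ε * (t - s)) • S) (g1 (x s) (y s + σ • ξ s))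

/-- Fast component of the time-rescaled slow–fast integral system. -/
def RSfast (F : E₂ →L[ℝ] E₂) (g2 : E₁ → E₂ → E₂) (σ : ℝ) (ξ : ℝ → E₂)
    (x : ℝ → E₁) (y : ℝ → E₂) (t : ℝ) : E₂ :=
  ∫ s in Set.Iic t, NormedSpace.exp ((t - s) • F) (g2 (x s) (y s + σ • ξ s))

/-- Right-hand side of the critical (`ε = 0`) integral equation. -/
def Crit (F : E₂ →L[ℝ] E₂) (g2 : E₁ → E₂ → E₂) (σ : ℝ) (ξ : ℝ → E₂) (x0 : E₁)
    (y : ℝ → E₂) (t : ℝ) : E₂ :=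
  ∫ s in Set.Iic t, NormedSpace.exp ((t - s) • F) (g2 x0 (y s + σ • ξ s))


private lemma exp_apply_hasDerivAt' {E : Type*} [NormedAddCommGroup E] [NormedSpace ℝ E] [CompleteSpace E]
    (S : E →L[ℝ] E) (x0 : E) (u : ℝ) :
    HasDerivAt (fun u : ℝ => NormedSpace.exp (u • S) x0) (NormedSpace.exp (u • S) (S x0)) u := by
  have h := hasDerivAt_exp_smul_const (𝕂 := ℝ) S u
  have h2 := h.clm_apply (hasDerivAt_const u x0)
  simpa using h2

private lemma integral_exp_mul_zero' (a b : ℝ) (ha : a ≠ 0) :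
    (∫ u in b..0, Real.exp (a * u)) = (1 - Real.exp (a * b)) / a := by
  have h : ∀ u ∈ Set.uIcc b 0, HasDerivAt (fun u => Real.exp (a*u)/a) (Real.exp (a*u)) u := by
    intro u _
    have h1 : HasDerivAt (fun u : ℝ => a * u) a u := by simpa using (hasDerivAt_id u).const_mul a
    have h2 := (Real.hasDerivAt_exp (a*u)).comp u h1
    have h3 := h2.div_const a
    refine h3.congr_deriv ?_
    field_simp
  rw [intervalIntegral.integral_eq_sub_of_hasDerivAt h
    ((Real.continuous_exp.comp (by continuity)).intervalIntegrable _ _)]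
  simp
  ring

private lemma integral_exp_mul_sub' (a t : ℝ) (ha : a ≠ 0) :
    (∫ s in t..0, Real.exp (a * (t - s))) = (1 - Real.exp (a * t)) / a := by
  have h : ∀ s ∈ Set.uIcc t 0, HasDerivAt (fun s => -(Real.exp (a*(t-s))/a)) (Real.exp (a*(t-s))) s := by
    intro s _
    have h1 : HasDerivAt (fun s : ℝ => a * (t - s)) (-a) s := by
      simpa using ((hasDerivAt_id s).const_sub t).const_mul a
    have h2 := (Real.hasDerivAt_exp (a*(t-s))).comp s h1
    have h3 := (h2.div_const a).neg
    refine h3.congr_deriv ?_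
    field_simp
  rw [intervalIntegral.integral_eq_sub_of_hasDerivAt h
    ((Real.continuous_exp.comp (by continuity)).intervalIntegrable _ _)]
  simp
  ring

set_option maxHeartbeats 1000000 in
/-- If `‖g₁‖ ≤ C` then the slow component of the rescaled solution
stays close to its initial value: `‖x̃^ε(t) - x₀‖ ≤ C₁(1 - e^{εγ_s t})` for `t ≤ 0`. -/
theorem rescaled_slow_component_estimate
    {E₁ E₂ : Type*}
    [NormedAddCommGroup E₁] [NormedSpace ℝ E₁] [FiniteDimensional ℝ E₁] [MeasurableSpace E₁] [BorelSpace E₁]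
    [NormedAddCommGroup E₂] [NormedSpace ℝ E₂] [FiniteDimensional ℝ E₂] [MeasurableSpace E₂] [BorelSpace E₂]
    (S : E₁ →L[ℝ] E₁) (F : E₂ →L[ℝ] E₂)
    (γs γf γ K σ : ℝ)
    (hγs : 0 < γs) (hγf : γf < 0) (hγ : 0 < γ) (hK : 0 < K)
    (hgap : K < -(γ + γf)) (hσ : 0 ≤ σ)
    (hS : ∀ t ≤ (0:ℝ), ∀ x : E₁, ‖NormedSpace.exp (t • S) x‖ ≤ Real.exp (γs * t) * ‖x‖)
    (hF : ∀ t ≥ (0:ℝ), ∀ y : E₂, ‖NormedSpace.exp (t • F) y‖ ≤ Real.exp (γf * t) * ‖y‖)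
    (g1 : E₁ → E₂ → E₁) (g2 : E₁ → E₂ → E₂)
    (hg1l : ∀ x₁ y₁ x₂ y₂, ‖g1 x₁ y₁ - g1 x₂ y₂‖ ≤ K * (‖x₁ - x₂‖ + ‖y₁ - y₂‖))
    (hg2l : ∀ x₁ y₁ x₂ y₂, ‖g2 x₁ y₁ - g2 x₂ y₂‖ ≤ K * (‖x₁ - x₂‖ + ‖y₁ - y₂‖))
    (hg10 : g1 0 0 = 0) (hg20 : g2 0 0 = 0)
    (ξ : ℝ → E₂) (hξm : Measurable ξ)
    (hξb : ∀ r : ℝ, ∃ M, ∀ t : ℝ, |t| ≤ r → ‖ξ t‖ ≤ M)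
    (hξ : ∃ M, ∀ t ≤ (0:ℝ), Real.exp (γ * t) * ‖ξ t‖ ≤ M)
    (ε : ℝ) (hε : 0 < ε) (hρ : (ε * K / (γ + ε * γs) - K / (γ + γf)) < 1)
    (C : ℝ) (hC : 0 < C) (hg1bd : ∀ x y, ‖g1 x y‖ ≤ C)
    (x0 : E₁) (xt : ℝ → E₁) (yt : ℝ → E₂)
    (hmem : MemCneg (-γ) xt ∧ MemCneg (-γ) yt)
    (hsol : ∀ t ≤ (0:ℝ), xt t = RSslow S g1 σ ε ξ x0 xt yt t ∧
      yt t = RSfast F g2 σ ξ xt yt t) :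
    ∀ t ≤ (0:ℝ), ‖xt t - x0‖ ≤ (‖S x0‖ + C) / γs * (1 - Real.exp (ε * γs * t)) := by
  
  intro t ht
  have ha0 : 0 < ε * γs := mul_pos hε hγs
  have hεt : ε * t ≤ 0 := mul_nonpos_of_nonneg_of_nonpos hε.le ht
  rw [(hsol t ht).1]
  unfold RSslow
  set I := ∫ s in (0:ℝ)..t, NormedSpace.exp ((ε * (t - s)) • S) (g1 (xt s) (yt s + σ • ξ s)) with hI
  have hftc : (∫ u in (0:ℝ)..(ε*t), NormedSpace.exp (u • S) (S x0)) =
      NormedSpace.exp ((ε*t) • S) x0 - x0 := by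
    have hcont : Continuous fun u : ℝ => NormedSpace.exp (u • S) (S x0) :=
      continuous_iff_continuousAt.2 fun u => (exp_apply_hasDerivAt' S (S x0) u).continuousAt
    have := intervalIntegral.integral_eq_sub_of_hasDerivAt
      (f := fun u : ℝ => NormedSpace.exp (u • S) x0) (a := (0:ℝ)) (b := ε*t)
      (fun u _ => exp_apply_hasDerivAt' S x0 u)
      (hcont.intervalIntegrable _ _)
    rw [this]
    simp [NormedSpace.exp_zero]
  have hA : ‖NormedSpace.exp ((ε*t) • S) x0 - x0‖ ≤
      ‖S x0‖ * ((1 - Real.exp (ε * γs * t)) / γs) := by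
    rw [← hftc, intervalIntegral.integral_symm, norm_neg]
    have hbd : ∀ᵐ u ∂(volume.restrict (Set.uIoc (ε*t) 0)),
        ‖NormedSpace.exp (u • S) (S x0)‖ ≤ Real.exp (γs * u) * ‖S x0‖ := by
      refine (ae_restrict_mem measurableSet_uIoc).mono fun u hu => ?_
      rw [Set.uIoc_of_le hεt] at hu
      exact hS u hu.2 (S x0)
    have hgi : IntervalIntegrable (fun u => Real.exp (γs * u) * ‖S x0‖) volume (ε*t) 0 :=
      (Continuous.mul (Real.continuous_exp.comp (by continuity)) continuous_const).intervalIntegrable _ _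
    refine (intervalIntegral.norm_integral_le_abs_of_norm_le hbd hgi).trans_eq ?_
    rw [intervalIntegral.integral_mul_const, integral_exp_mul_zero' γs (ε*t) hγs.ne']
    rw [abs_of_nonneg]
    · rw [show γs * (ε * t) = ε * γs * t by ring]; ring
    · apply mul_nonneg _ (norm_nonneg _)
      apply div_nonneg _ hγs.le
      simp [Real.exp_le_one_iff.2 (mul_nonpos_of_nonneg_of_nonpos hγs.le hεt)]
  have hB : ‖ε • I‖ ≤ C / γs * (1 - Real.exp (ε * γs * t)) := by
    rw [norm_smul, Real.norm_of_nonneg hε.le, hI, intervalIntegral.integral_symm, norm_neg]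
    have hbd : ∀ᵐ s ∂(volume.restrict (Set.uIoc t 0)),
        ‖NormedSpace.exp ((ε * (t - s)) • S) (g1 (xt s) (yt s + σ • ξ s))‖ ≤
          Real.exp ((ε * γs) * (t - s)) * C := by
      refine (ae_restrict_mem measurableSet_uIoc).mono fun s hs => ?_
      rw [Set.uIoc_of_le ht] at hs
      have h1 : ε * (t - s) ≤ 0 :=
        mul_nonpos_of_nonneg_of_nonpos hε.le (by linarith [hs.1])
      refine (hS _ h1 _).trans ?_
      rw [show γs * (ε * (t - s)) = (ε * γs) * (t - s) by ring]
      exact mul_le_mul_of_nonneg_left (hg1bd _ _) (Real.exp_pos _).le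
    have hgi : IntervalIntegrable (fun s => Real.exp ((ε * γs) * (t - s)) * C) volume t 0 :=
      (Continuous.mul (Real.continuous_exp.comp (by continuity)) continuous_const).intervalIntegrable _ _
    have hle := intervalIntegral.norm_integral_le_abs_of_norm_le hbd hgi
    rw [intervalIntegral.integral_mul_const, integral_exp_mul_sub' (ε*γs) t ha0.ne'] at hle
    have hval : |(1 - Real.exp (ε * γs * t)) / (ε * γs) * C| =
        (1 - Real.exp (ε * γs * t)) / (ε * γs) * C := by
      apply abs_of_nonneg
      apply mul_nonneg _ hC.le
      apply div_nonneg _ ha0.le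
      have : Real.exp (ε * γs * t) ≤ 1 :=
        Real.exp_le_one_iff.2 (by nlinarith)
      linarith
    rw [hval] at hle
    calc ε * ‖∫ s in t..0, NormedSpace.exp ((ε * (t - s)) • S) (g1 (xt s) (yt s + σ • ξ s))‖
        ≤ ε * ((1 - Real.exp (ε * γs * t)) / (ε * γs) * C) :=
          mul_le_mul_of_nonneg_left hle hε.le
      _ = C / γs * (1 - Real.exp (ε * γs * t)) := by field_simp
  calc ‖NormedSpace.exp ((ε * t) • S) x0 + ε • I - x0‖
      = ‖(NormedSpace.exp ((ε * t) • S) x0 - x0) + ε • I‖ := by rw [add_sub_right_comm]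
    _ ≤ ‖NormedSpace.exp ((ε * t) • S) x0 - x0‖ + ‖ε • I‖ := norm_add_le _ _
    _ ≤ ‖S x0‖ * ((1 - Real.exp (ε * γs * t)) / γs) + C / γs * (1 - Real.exp (ε * γs * t)) :=
        add_le_add hA hB
    _ = (‖S x0‖ + C) / γs * (1 - Real.exp (ε * γs * t)) := by ring
end
end
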